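/- arXiv:1202.6263 — 7 statements merged into one kernel-verified Lean document; each statement's English description precedes it below -/
import Mathlib

section
/- Let p̃ be a probability mass function on ℕ with finite support. There exists a unique p̂ ∈ 𝒞 such that Q(p̂) = inf_{p ∈ 𝒞} Q(p) = inf_{p ∈ 𝒦, ∑p(i)²<∞} Q(p). Moreover, the support of p̂ is finite, and the maximum ŝ of the support of p̂ satisfies ŝ ≥ s̃, where s̃ is the maximum of the support of p̃. -/
open scoped BigOperators
open scoped InnerProductSpace ENNReal NNReal

noncomputable section

/-- A discrete function `f : ℕ → ℝ` is convex if
`f(i+1) - 2 f(i) + f(i-1) ≥ 0` for every `i ≥ 1`. -/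
def ConvexNat (f : ℕ → ℝ) : Prop :=
  ∀ i : ℕ, 0 ≤ f (i + 2) - 2 * f (i + 1) + f i

/-- `𝒦`: convex, nonnegative functions on `ℕ` tending to `0` at infinity. -/
def MemK (f : ℕ → ℝ) : Prop :=
  ConvexNat f ∧ (∀ i, 0 ≤ f i) ∧ Filter.Tendsto f Filter.atTop (nhds 0)

/-- `𝒞`: elements of `𝒦` summing to one. -/
def MemC (f : ℕ → ℝ) : Prop := MemK f ∧ ∑' i, f i = 1

/-- The least squares criterion `Q(f) = (1/2) ∑ f(i)² − ∑ f(i) p̃(i)`. -/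
def Crit (ptil f : ℕ → ℝ) : ℝ :=
  (1 / 2) * ∑' i, (f i) ^ 2 - ∑' i, f i * ptil i

/-- A probability mass function on `ℕ` with finite support. -/
def IsFinPMF (p : ℕ → ℝ) : Prop :=
  (∀ i, 0 ≤ p i) ∧ (Function.support p).Finite ∧ ∑' i, p i = 1

/-- `s` is the maximum of the support of `p`. -/
def IsMaxSupport (p : ℕ → ℝ) (s : ℕ) : Prop :=
  p s ≠ 0 ∧ ∀ i, p i ≠ 0 → i ≤ s

abbrev E2 : Type := lp (fun _ : ℕ => ℝ) 2

lemma rpow2 (x : ℝ) : ‖x‖ ^ (2 : ℝ≥0∞).toReal = x ^ 2 := by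
  have h : (2 : ℝ≥0∞).toReal = ((2:ℕ):ℝ) := by norm_num
  rw [h, Real.rpow_natCast, Real.norm_eq_abs, sq_abs]

lemma memℓp_two_of_sq {f : ℕ → ℝ} (hf : Summable (fun i => f i ^ 2)) : Memℓp f 2 := by
  apply memℓp_gen
  exact hf.congr (fun i => (rpow2 (f i)).symm)

lemma summable_sq_of_mem (f : E2) : Summable (fun i => (f i)^2) := by
  have h := (lp.memℓp f).summable (p := 2) (by norm_num)
  exact h.congr (fun i => rpow2 (f i))

example (f g : E2) : ⟪f, g⟫_ℝ = ∑' i, f i * g i := (lp.inner_eq_tsum f g).trans (by simp [mul_comm])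

lemma memℓp_of_finsupp {f : ℕ → ℝ} (hf : (Function.support f).Finite) : Memℓp f 2 := by
  apply memℓp_two_of_sq
  apply summable_of_ne_finset_zero (s := hf.toFinset)
  intro i hi
  have : f i = 0 := by simpa [Function.mem_support] using (fun h => hi (hf.mem_toFinset.2 h))
  simp [this]


def KK : Set E2 := {f | ConvexNat (fun i => f i) ∧ ∀ i, 0 ≤ f i}

lemma continuous_eval2 (i : ℕ) : Continuous (fun f : E2 => f i) := by
  have h : LipschitzWith 1 (fun f : E2 => f i) := by
    intro f g
    rw [edist_dist, edist_dist]
    simp only [ENNReal.coe_one, one_mul]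
    apply ENNReal.ofReal_le_ofReal
    rw [dist_eq_norm, dist_eq_norm]
    have : ‖(f - g) i‖ ≤ ‖f - g‖ := lp.norm_apply_le_norm (by norm_num) (f - g) i
    simpa using this
  exact h.continuous

lemma isClosed_KK : IsClosed KK := by
  have h1 : IsClosed {f : E2 | ConvexNat (fun i => f i)} := by
    have he : {f : E2 | ConvexNat (fun i => f i)} =
        ⋂ i : ℕ, {f : E2 | 0 ≤ f (i+2) - 2 * f (i+1) + f i} := by
      ext f; simp [ConvexNat, Set.mem_iInter]
    rw [he]
    refine isClosed_iInter (fun i => ?_)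
    have hc : Continuous (fun f : E2 => f (i+2) - 2 * f (i+1) + f i) :=
      (((continuous_eval2 (i+2)).sub ((continuous_const.mul (continuous_eval2 (i+1))))).add
        (continuous_eval2 i))
    exact isClosed_le continuous_const hc
  have h2 : IsClosed {f : E2 | ∀ i, 0 ≤ f i} := by
    have he : {f : E2 | ∀ i, 0 ≤ f i} = ⋂ i : ℕ, {f : E2 | 0 ≤ f i} := by
      ext f; simp [Set.mem_iInter]
    rw [he]
    exact isClosed_iInter (fun i => isClosed_le continuous_const (continuous_eval2 i))
  have : KK = {f : E2 | ConvexNat (fun i => f i)} ∩ {f : E2 | ∀ i, 0 ≤ f i} := rfl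
  rw [this]; exact h1.inter h2

lemma convex_KK : Convex ℝ KK := by
  intro f hf g hg a b ha hb hab
  constructor
  · intro i
    have h1 := hf.1 i; have h2 := hg.1 i
    have hco : ∀ j, (a • f + b • g) j = a * f j + b * g j := by
      intro j
      simp [lp.coeFn_add, lp.coeFn_smul]; rfl
    simp only [hco]
    nlinarith
  · intro i
    have hco : (a • f + b • g) i = a * f i + b * g i := by
      simp [lp.coeFn_add, lp.coeFn_smul]; rfl
    rw [hco]
    have := hf.2 i; have := hg.2 i
    positivity

lemma zero_mem_KK : (0 : E2) ∈ KK := by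
  constructor
  · intro i; simp [lp.coeFn_zero]
  · intro i; simp [lp.coeFn_zero]
-- D-lemmas on plain functions
section Dlem
variable {v : ℕ → ℝ}

/-- difference -/
def Dd (v : ℕ → ℝ) (i : ℕ) : ℝ := v i - v (i + 1)

lemma Dd_anti (hc : ConvexNat v) : ∀ i j, i ≤ j → Dd v j ≤ Dd v i := by
  intro i j hij
  induction j with
  | zero => simp_all
  | succ n ih =>
    rcases Nat.lt_or_ge i (n+1) with h | h
    · have := ih (Nat.lt_succ_iff.mp h)
      have hcv := hc n
      have : Dd v (n+1) ≤ Dd v n := by unfold Dd; linarith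
      linarith [ih (Nat.lt_succ_iff.mp h)]
    · have : i = n + 1 := le_antisymm hij h
      simp [this]

lemma Dd_tendsto (ht : Filter.Tendsto v Filter.atTop (nhds 0)) :
    Filter.Tendsto (Dd v) Filter.atTop (nhds 0) := by
  have h2 : Filter.Tendsto (fun i => v (i+1)) Filter.atTop (nhds 0) :=
    ht.comp (Filter.tendsto_add_atTop_nat 1)
  have := ht.sub h2
  show Filter.Tendsto (fun i => Dd v i) _ _
  simpa [Dd] using this

lemma Dd_nonneg (hc : ConvexNat v) (ht : Filter.Tendsto v Filter.atTop (nhds 0)) :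
    ∀ i, 0 ≤ Dd v i := by
  intro i
  refine le_of_tendsto (Dd_tendsto ht) ?_
  filter_upwards [Filter.eventually_ge_atTop i] with j hj
  exact Dd_anti hc i j hj

lemma v_antitone (hc : ConvexNat v) (ht : Filter.Tendsto v Filter.atTop (nhds 0)) :
    ∀ i, v (i+1) ≤ v i := by
  intro i
  have := Dd_nonneg hc ht i
  unfold Dd at this; linarith

/-- if eventually flat and tendsto 0 then eventually 0 -/
lemma eventually_zero {a : ℕ → ℝ} {M : ℕ} (h : ∀ n, M ≤ n → a (n+1) = a n)
    (ht : Filter.Tendsto a Filter.atTop (nhds 0)) : ∀ n, M ≤ n → a n = 0 := by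
  have hconst : ∀ n, M ≤ n → a n = a M := by
    intro n hn
    induction n with
    | zero => simp_all
    | succ k ih =>
      rcases Nat.lt_or_ge M (k+1) with h' | h'
      · have hk := Nat.lt_succ_iff.mp h'
        rw [h k hk, ih hk]
      · have : M = k + 1 := le_antisymm hn h'
        rw [this]
    
  have hAM : a M = 0 := by
    have : Filter.Tendsto a Filter.atTop (nhds (a M)) := by
      apply Filter.Tendsto.congr' _ tendsto_const_nhds
      filter_upwards [Filter.eventually_ge_atTop M] with n hn
      exact (hconst n hn).symm
    exact tendsto_nhds_unique this ht
  intro n hn; rw [hconst n hn, hAM]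

end Dlem
/-- second difference -/
def cc (v : ℕ → ℝ) (n : ℕ) : ℝ := v (n+2) - 2 * v (n+1) + v n

lemma cc_eq_Dd (v : ℕ → ℝ) (n : ℕ) : cc v n = Dd v n - Dd v (n+1) := by
  unfold cc Dd; ring

/-- triangular function -/
def Tfun (n : ℕ) (i : ℕ) : ℝ := ((n + 1 - i : ℕ) : ℝ)

lemma Tfun_nonneg (n i : ℕ) : 0 ≤ Tfun n i := Nat.cast_nonneg _

lemma Tfun_eq_zero {n i : ℕ} (h : n < i) : Tfun n i = 0 := by
  unfold Tfun
  have : n + 1 - i = 0 := by omega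
  simp [this]

lemma Tfun_sec (n i : ℕ) :
    Tfun n (i+2) - 2 * Tfun n (i+1) + Tfun n i = if i = n then 1 else 0 := by
  unfold Tfun
  rcases Nat.lt_or_ge i n with h | h
  · have e0 : n + 1 - i = (n - 1 - i) + 2 := by omega
    have e1 : n + 1 - (i+1) = (n - 1 - i) + 1 := by omega
    have e2 : n + 1 - (i+2) = n - 1 - i := by omega
    rw [e0, e1, e2, if_neg (by omega)]
    push_cast; ring
  · rcases Nat.eq_or_lt_of_le h with h' | h'
    · have e0 : n + 1 - i = 1 := by omega
      have e1 : n + 1 - (i+1) = 0 := by omega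
      have e2 : n + 1 - (i+2) = 0 := by omega
      rw [e0, e1, e2, if_pos (by omega)]; norm_num
    · have e0 : n + 1 - i = 0 := by omega
      have e1 : n + 1 - (i+1) = 0 := by omega
      have e2 : n + 1 - (i+2) = 0 := by omega
      rw [e0, e1, e2, if_neg (by omega)]; norm_num

lemma Tfun_convex (n : ℕ) : ConvexNat (Tfun n) := by
  intro i
  rw [show Tfun n (i+2) - 2 * Tfun n (i+1) + Tfun n i = if i = n then 1 else 0 from Tfun_sec n i]
  split <;> norm_num

lemma Tfun_memℓp (n : ℕ) : Memℓp (Tfun n) 2 := by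
  apply memℓp_of_finsupp
  apply Set.Finite.subset (Set.finite_Iic n)
  intro i hi
  simp only [Function.mem_support] at hi
  by_contra h
  exact hi (Tfun_eq_zero (by simpa using h))

/-- key: pointwise lower bound v i ≥ (n+1-i) * Dd v n -/
lemma v_lower {v : ℕ → ℝ} (hc : ConvexNat v) (h0 : ∀ i, 0 ≤ v i)
    (ht : Filter.Tendsto v Filter.atTop (nhds 0)) (n : ℕ) :
    ∀ i, Tfun n i * Dd v n ≤ v i := by
  have key : ∀ j, j ≤ n + 1 → (j : ℝ) * Dd v n ≤ v (n + 1 - j) := by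
    intro j
    induction j with
    | zero => intro _; simpa using h0 (n+1)
    | succ k ih =>
      intro hk
      have hk' : k ≤ n + 1 := by omega
      have ihk := ih hk'
      have hidx : n + 1 - (k+1) + 1 = n + 1 - k := by omega
      have hD : Dd v n ≤ Dd v (n + 1 - (k+1)) := Dd_anti hc _ n (by omega)
      have hv : v (n + 1 - (k+1)) = Dd v (n + 1 - (k+1)) + v (n + 1 - k) := by
        rw [← hidx]; unfold Dd; ring
      rw [hv]
      have hcast : ((k+1 : ℕ) : ℝ) = (k : ℝ) + 1 := by push_cast; ring
      rw [hcast]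
      linarith
  intro i
  rcases Nat.lt_or_ge n i with h | h
  · rw [Tfun_eq_zero h]; simpa using h0 i
  · have hj : n + 1 - i ≤ n + 1 := by omega
    have := key (n + 1 - i) hj
    have hrw : n + 1 - (n + 1 - i) = i := by omega
    rw [hrw] at this
    unfold Tfun
    convert this using 2
section Comb

variable (ptil v : ℕ → ℝ)

def Gm (m : ℕ) : ℝ := ∑ i ∈ Finset.range (m+1), (v i - ptil i)
def gam (n : ℕ) : ℝ := ∑ m ∈ Finset.range (n+1), Gm ptil v m
def Uu (m : ℕ) : ℝ := ∑ i ∈ Finset.range (m+1), ptil i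
def Sv (m : ℕ) : ℝ := ∑ i ∈ Finset.range (m+1), v i

lemma Gm_succ (m : ℕ) : Gm ptil v (m+1) = Gm ptil v m + (v (m+1) - ptil (m+1)) :=
  Finset.sum_range_succ _ _

lemma gam_succ (n : ℕ) : gam ptil v (n+1) = gam ptil v n + Gm ptil v (n+1) :=
  Finset.sum_range_succ _ _

lemma gam_zero : gam ptil v 0 = Gm ptil v 0 := by simp [gam]

lemma Gm_eq (m : ℕ) : Gm ptil v m = Sv v m - Uu ptil m := by
  unfold Gm Sv Uu; rw [← Finset.sum_sub_distrib]

lemma Sv_succ (m : ℕ) : Sv v (m+1) = Sv v m + v (m+1) := Finset.sum_range_succ _ _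

/-- weighted representation of gam -/
lemma gam_weighted (n : ℕ) :
    gam ptil v n = ∑ i ∈ Finset.range (n+1), Tfun n i * (v i - ptil i) := by
  induction n with
  | zero => simp [gam, Gm, Tfun]
  | succ n ih =>
    rw [gam_succ, ih]
    rw [Finset.sum_range_succ (fun i => Tfun (n+1) i * (v i - ptil i))]
    have hz : Tfun (n+1) (n+1) * (v (n+1) - ptil (n+1)) = v (n+1) - ptil (n+1) := by
      unfold Tfun
      have : n + 1 + 1 - (n+1) = 1 := by omega
      rw [this]; norm_num
    rw [hz]
    have hsum : ∑ i ∈ Finset.range (n+1), Tfun (n+1) i * (v i - ptil i)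
        = ∑ i ∈ Finset.range (n+1), (Tfun n i * (v i - ptil i) + (v i - ptil i)) := by
      apply Finset.sum_congr rfl
      intro i hi
      have hi' : i ≤ n := Nat.lt_succ_iff.mp (Finset.mem_range.mp hi)
      have : Tfun (n+1) i = Tfun n i + 1 := by
        unfold Tfun
        have : n + 1 + 1 - i = (n + 1 - i) + 1 := by omega
        rw [this]; push_cast; ring
      rw [this]; ring
    rw [hsum, Finset.sum_add_distrib]
    have : Gm ptil v (n+1) = ∑ i ∈ Finset.range (n+1), (v i - ptil i) + (v (n+1) - ptil (n+1)) := by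
      unfold Gm; rw [Finset.sum_range_succ]
    rw [this]; ring

end Comb
section Main
open Filter Finset

lemma gam_interval (ptil v : ℕ → ℝ) {a b : ℕ} (hab : a ≤ b) :
    gam ptil v b = gam ptil v a + ∑ m ∈ Finset.Ico (a+1) (b+1), Gm ptil v m := by
  unfold gam
  simp only [Finset.range_eq_Ico]
  exact (Finset.sum_Ico_consecutive _ (Nat.zero_le (a+1)) (by omega)).symm

theorem comb_main (ptil v : ℕ → ℝ) (stil : ℕ)
    (h0p : ∀ i, 0 ≤ ptil i) (hps : ∑' i, ptil i = 1)
    (hsupp : ∀ i, ptil i ≠ 0 → i ≤ stil) (hpst : ptil stil ≠ 0)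
    (hc : ConvexNat v) (h0 : ∀ i, 0 ≤ v i) (ht : Filter.Tendsto v Filter.atTop (nhds 0))
    (hγ : ∀ n, 0 ≤ gam ptil v n) (hknot : ∀ n, cc v n ≠ 0 → gam ptil v n = 0) :
    ∃ nh, (∀ i, nh < i → v i = 0) ∧ v nh ≠ 0 ∧ stil ≤ nh ∧
      ∑ i ∈ Finset.range (nh+1), v i = 1 := by
  have hpst' : 0 < ptil stil := lt_of_le_of_ne (h0p stil) (Ne.symm hpst)
  have hcc0 : ∀ n, 0 ≤ cc v n := fun n => hc n
  have hDd0 : ∀ i, 0 ≤ Dd v i := Dd_nonneg hc ht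
  have hvDd : ∀ n, cc v n ≤ v n := by
    intro n
    have h1 : v n = Dd v n + v (n+1) := by unfold Dd; ring
    have h2 : Dd v n = cc v n + Dd v (n+1) := by rw [cc_eq_Dd]; ring
    have := h0 (n+1); have := hDd0 (n+1)
    linarith
  -- ptil vanishes beyond stil
  have hp0 : ∀ i, stil < i → ptil i = 0 := by
    intro i hi; by_contra h; exact absurd (hsupp i h) (by omega)
  -- U facts
  have hU1 : ∀ j, stil ≤ j → Uu ptil j = 1 := by
    intro j hj
    rw [← hps]
    unfold Uu
    exact (tsum_eq_sum (fun i hi => hp0 i (by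
      simp only [Finset.mem_range] at hi; omega))).symm
  have hUle : ∀ j, Uu ptil j ≤ 1 := by
    intro j
    rcases le_or_gt stil j with h | h
    · exact le_of_eq (hU1 j h)
    · rw [← hU1 stil le_rfl]
      unfold Uu
      apply Finset.sum_le_sum_of_subset_of_nonneg
      · intro x hx; simp only [Finset.mem_range] at *; omega
      · intro i _ _; exact h0p i
  have hUlt : ∀ j, j < stil → Uu ptil j ≤ 1 - ptil stil := by
    intro j hj
    have h1 : Uu ptil j + ptil stil ≤ Uu ptil stil := by
      have hsplit : Uu ptil stil = Uu ptil j + ∑ i ∈ Finset.Ico (j+1) (stil+1), ptil i := by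
        unfold Uu
        simp only [Finset.range_eq_Ico]
        exact (Finset.sum_Ico_consecutive _ (Nat.zero_le (j+1)) (by omega)).symm
      have hmem : stil ∈ Finset.Ico (j+1) (stil+1) := by simp; omega
      have h2 := Finset.single_le_sum (f := fun i => ptil i) (fun i _ => h0p i) hmem
      rw [hsplit]
      linarith
    rw [hU1 stil le_rfl] at h1
    linarith
  -- G monotone beyond stil
  have hGmono : ∀ m, stil ≤ m → Gm ptil v m ≤ Gm ptil v (m+1) := by
    intro m hm
    rw [Gm_succ, hp0 (m+1) (by omega)]
    have := h0 (m+1); linarith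
  have hGmono' : ∀ a b, stil ≤ a → a ≤ b → Gm ptil v a ≤ Gm ptil v b := by
    intro a b ha hab
    induction b, hab using Nat.le_induction with
    | base => exact le_rfl
    | succ n hn ih => exact le_trans ih (hGmono n (le_trans ha hn))
  -- Step: finitely many knots
  have hfin : ∃ N, ∀ n, N ≤ n → cc v n = 0 := by
    by_contra hinf
    push_neg at hinf
    obtain ⟨n1, hn1ge, hn1⟩ := hinf stil
    obtain ⟨n2, hn2ge, hn2⟩ := hinf (n1 + 2)
    have hγ1 : gam ptil v n1 = 0 := hknot n1 hn1
    have hγ2 : gam ptil v n2 = 0 := hknot n2 hn2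
    have hG1 : 0 ≤ Gm ptil v (n1+1) := by
      have := hγ (n1+1)
      rw [gam_succ, hγ1, zero_add] at this
      exact this
    have hsum0 : ∑ m ∈ Finset.Ico (n1+1) (n2+1), Gm ptil v m = 0 := by
      have := gam_interval ptil v (le_trans (by omega) hn2ge : n1 ≤ n2)
      rw [hγ1, hγ2, zero_add] at this
      exact this.symm
    have hterm0 : ∀ m ∈ Finset.Ico (n1+1) (n2+1), Gm ptil v m = 0 := by
      have hnn : ∀ m ∈ Finset.Ico (n1+1) (n2+1), 0 ≤ Gm ptil v m := by
        intro m hm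
        simp only [Finset.mem_Ico] at hm
        exact le_trans hG1 (hGmono' (n1+1) m (by omega) (by omega))
      exact (Finset.sum_eq_zero_iff_of_nonneg hnn).mp hsum0
    have hGn2 : Gm ptil v n2 = 0 := hterm0 n2 (by simp; omega)
    have hGn2' : Gm ptil v (n2-1) = 0 := hterm0 (n2-1) (by simp; omega)
    have hvz : v n2 = 0 := by
      have h1 : Gm ptil v n2 = Gm ptil v (n2-1) + (v n2 - ptil n2) := by
        have : n2 - 1 + 1 = n2 := by omega
        conv_lhs => rw [← this]
        rw [Gm_succ, this]
      rw [hGn2, hGn2', hp0 n2 (by omega)] at h1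
      linarith
    have : 0 < cc v n2 := lt_of_le_of_ne (hcc0 n2) (Ne.symm hn2)
    have := hvDd n2
    linarith
  obtain ⟨N, hN⟩ := hfin
  -- knots nonempty
  have hne : ∃ n, cc v n ≠ 0 := by
    by_contra hall
    push_neg at hall
    have hDd_all : ∀ n, Dd v n = 0 := by
      have h' := eventually_zero (M := 0) (a := Dd v) (fun n _ => by
        have := hall n
        rw [cc_eq_Dd] at this
        linarith) (Dd_tendsto ht)
      exact fun n => h' n (Nat.zero_le n)
    have hvz : ∀ n, v n = 0 := by
      have h' := eventually_zero (M := 0) (a := v) (fun n _ => by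
        have := hDd_all n
        unfold Dd at this; linarith) ht
      exact fun n => h' n (Nat.zero_le n)
    -- then gam stil < 0
    have hγs := hγ stil
    have hGm_le : ∀ m, Gm ptil v m = - Uu ptil m := by
      intro m; rw [Gm_eq]
      have : Sv v m = 0 := Finset.sum_eq_zero (fun i _ => hvz i)
      rw [this]; ring
    have hUnn : ∀ m, 0 ≤ Uu ptil m := fun m => Finset.sum_nonneg (fun i _ => h0p i)
    have hUst : ptil stil ≤ Uu ptil stil := by
      unfold Uu
      exact Finset.single_le_sum (f := fun i => ptil i) (fun i _ => h0p i) (by simp)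
    have : gam ptil v stil ≤ - ptil stil := by
      unfold gam
      rw [Finset.sum_range_succ]
      have h1 : ∑ m ∈ Finset.range stil, Gm ptil v m ≤ 0 := by
        apply Finset.sum_nonpos
        intro m _
        rw [hGm_le m]
        linarith [hUnn m]
      rw [hGm_le stil]
      linarith
    linarith
  obtain ⟨n0, hn0⟩ := hne
  classical
  -- define the largest knot
  have hn0N : n0 < N := by
    by_contra h
    exact hn0 (hN n0 (by omega))
  set s := (Finset.range (N+1)).filter (fun n => cc v n ≠ 0) with hs
  have hsne : s.Nonempty := ⟨n0, by simp [hs]; exact ⟨by omega, hn0⟩⟩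
  set nh := s.max' hsne with hnh
  have hnh_knot : cc v nh ≠ 0 := by
    have := s.max'_mem hsne
    simp [hs] at this
    exact this.2
  have hnh_max : ∀ n, cc v n ≠ 0 → n ≤ nh := by
    intro n hn
    have hnN : n < N := by
      by_contra h; exact hn (hN n (by omega))
    apply Finset.le_max'
    simp [hs]; exact ⟨by omega, hn⟩
  -- v vanishes beyond nh
  have hDd_z : ∀ n, nh + 1 ≤ n → Dd v n = 0 := by
    apply eventually_zero _ (Dd_tendsto ht)
    intro n hn
    have hcz : cc v n = 0 := by
      by_contra h
      have := hnh_max n h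
      omega
    rw [cc_eq_Dd] at hcz
    linarith
  have hv_z : ∀ n, nh + 1 ≤ n → v n = 0 := by
    apply eventually_zero _ ht
    intro n hn
    have := hDd_z n hn
    unfold Dd at this; linarith
  -- v nh = cc v nh > 0
  have hvnh : v nh = cc v nh := by
    have h1 : v nh = Dd v nh + v (nh+1) := by unfold Dd; ring
    have h2 : Dd v nh = cc v nh + Dd v (nh+1) := by rw [cc_eq_Dd]; ring
    rw [h1, h2, hv_z (nh+1) le_rfl, hDd_z (nh+1) le_rfl]
    ring
  have hvnh_pos : 0 < v nh := by
    rw [hvnh]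
    exact lt_of_le_of_ne (hcc0 nh) (Ne.symm hnh_knot)
  -- gamma nh = 0 and G nh ≤ 0
  have hγnh : gam ptil v nh = 0 := hknot nh hnh_knot
  have hGnh : Gm ptil v nh ≤ 0 := by
    rcases Nat.eq_zero_or_pos nh with h | h
    · rw [h] at hγnh ⊢
      exact le_of_eq (by rw [← gam_zero, hγnh])
    · obtain ⟨k, hk⟩ : ∃ k, nh = k + 1 := ⟨nh - 1, by omega⟩
      have hγk := hγ k
      rw [hk] at hγnh ⊢
      rw [gam_succ] at hγnh
      linarith
  -- Sv constant beyond nh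
  have hSv_const : ∀ m, nh ≤ m → Sv v m = Sv v nh := by
    intro m hm
    induction m with
    | zero => simp_all
    | succ k ih =>
      rcases Nat.lt_or_ge nh (k+1) with h | h
      · rw [Sv_succ, hv_z (k+1) (by omega), ih (by omega), add_zero]
      · have : nh = k+1 := by omega
        rw [this]
  -- stil ≤ nh
  have hstil_le : stil ≤ nh := by
    by_contra hlt
    push_neg at hlt
    set S := Sv v nh with hS
    have hSle : S ≤ 1 - ptil stil := by
      have h1 : Gm ptil v nh = S - Uu ptil nh := Gm_eq ptil v nh
      have h2 := hUlt nh hlt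
      linarith
    have hGneg : ∀ m, stil ≤ m → Gm ptil v m = S - 1 := by
      intro m hm
      rw [Gm_eq, hSv_const m (by omega), hU1 m hm]
    have hgam_lin : ∀ k, gam ptil v (stil + k + 1) = gam ptil v (stil + 1) + k * (S - 1) := by
      intro k
      induction k with
      | zero => simp
      | succ j ih =>
        have : stil + (j+1) + 1 = (stil + j + 1) + 1 := by omega
        rw [this, gam_succ, ih, hGneg (stil + j + 1 + 1) (by omega)]
        push_cast; ring
    obtain ⟨k, hk⟩ := exists_nat_gt ((gam ptil v (stil+1)) / (1 - S))
    have hpos : 0 < 1 - S := by linarith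
    have : gam ptil v (stil + 1) + k * (S - 1) < 0 := by
      have : gam ptil v (stil+1) < k * (1 - S) := by
        rw [div_lt_iff₀ hpos] at hk
        linarith
      linarith
    have := hγ (stil + k + 1)
    rw [hgam_lin k] at this
    linarith
  -- S = 1
  have hS1 : Sv v nh = 1 := by
    have h1 : Gm ptil v nh = Sv v nh - 1 := by
      rw [Gm_eq, hU1 nh hstil_le]
    have h2 : Gm ptil v (nh+1) = Sv v nh - 1 := by
      rw [Gm_eq, hSv_const (nh+1) (by omega), hU1 (nh+1) (by omega)]
    have h3 := hγ (nh+1)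
    rw [gam_succ, hγnh, zero_add, h2] at h3
    linarith
  exact ⟨nh, fun i hi => hv_z i hi, ne_of_gt hvnh_pos, hstil_le, hS1⟩

end Main
section Analytic
open Filter

lemma inner_E2 (f g : E2) : ⟪f, g⟫_ℝ = ∑' i, f i * g i := by
  rw [lp.inner_eq_tsum]
  congr 1
  simp [mul_comm]

lemma ConvexNat.add {f g : ℕ → ℝ} (hf : ConvexNat f) (hg : ConvexNat g) :
    ConvexNat (fun i => f i + g i) := by
  intro i
  have := hf i; have := hg i
  simp only
  linarith

lemma tendsto_of_sq_summable {f : ℕ → ℝ} (h0 : ∀ i, 0 ≤ f i)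
    (hs : Summable (fun i => f i ^ 2)) : Filter.Tendsto f Filter.atTop (nhds 0) := by
  have h1 : Filter.Tendsto (fun i => f i ^ 2) Filter.atTop (nhds 0) := hs.tendsto_atTop_zero
  have h2 : Filter.Tendsto (fun i => Real.sqrt (f i ^ 2)) Filter.atTop (nhds 0) := by
    have := (Real.continuous_sqrt.tendsto 0).comp h1
    simpa [Function.comp_def] using this
  refine h2.congr (fun i => ?_)
  rw [Real.sqrt_sq (h0 i)]

lemma memK_of_KK {f : E2} (hf : f ∈ KK) : MemK (fun i => f i) :=
  ⟨hf.1, hf.2, tendsto_of_sq_summable hf.2 (summable_sq_of_mem f)⟩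

lemma crit_norm (ptil : ℕ → ℝ) (U : E2) (hU : ∀ i, U i = ptil i) (F : E2) (f : ℕ → ℝ)
    (hF : ∀ i, F i = f i) :
    Crit ptil f = 1/2 * ‖F - U‖^2 - 1/2 * ‖U‖^2 := by
  have hns : ‖F - U‖ ^ 2 = ‖F‖ ^ 2 - 2 * ⟪F, U⟫_ℝ + ‖U‖ ^ 2 := norm_sub_sq_real F U
  have hF2 : ‖F‖ ^ 2 = ∑' i, (f i)^2 := by
    rw [← real_inner_self_eq_norm_sq, inner_E2]
    congr 1; ext i; rw [hF i]; ring
  have hFU : ⟪F, U⟫_ℝ = ∑' i, f i * ptil i := by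
    rw [inner_E2]
    congr 1; ext i; rw [hU i, hF i]
  rw [Crit, hns, hF2, hFU]
  ring

lemma summable_sq_of_memC {p : ℕ → ℝ} (hp : MemC p) : Summable (fun i => p i ^ 2) := by
  obtain ⟨⟨hc, h0, ht⟩, hsum⟩ := hp
  have hsummable : Summable p := by
    by_contra h
    rw [tsum_eq_zero_of_not_summable h] at hsum
    norm_num at hsum
  have hanti : ∀ i, p (i+1) ≤ p i := v_antitone hc ht
  have hbd : ∀ i, p i ≤ p 0 := by
    intro i
    induction i with
    | zero => exact le_refl (p 0)
    | succ k ih => exact le_trans (hanti k) ih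
  apply Summable.of_nonneg_of_le (fun i => sq_nonneg _) (fun i => ?_) (hsummable.mul_left (p 0))
  calc p i ^ 2 = p i * p i := sq (p i) ▸ by ring
  _ ≤ p 0 * p i := mul_le_mul_of_nonneg_right (hbd i) (h0 i)

end Analytic

set_option maxHeartbeats 1000000 in
/-- Theorem 1: existence and uniqueness of the constrained LSE `p̂`, which minimizes
`Q` both over `𝒞` and over square-summable elements of `𝒦`, has finite support, and
the maximum `ŝ` of its support satisfies `ŝ ≥ s̃`. -/
theorem stmt_0 (ptil : ℕ → ℝ) (hptil : IsFinPMF ptil)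
    (stil : ℕ) (hstil : IsMaxSupport ptil stil) :
    ∃! phat : ℕ → ℝ,
      MemC phat ∧
      Summable (fun i => (phat i) ^ 2) ∧
      (∀ p : ℕ → ℝ, MemC p → Crit ptil phat ≤ Crit ptil p) ∧
      (∀ p : ℕ → ℝ, MemK p → Summable (fun i => (p i) ^ 2) →
        Crit ptil phat ≤ Crit ptil p) ∧
      (Function.support phat).Finite ∧
      ∃ shat : ℕ, IsMaxSupport phat shat ∧ stil ≤ shat := by

  classical
  obtain ⟨h0p, hfinp, hsump⟩ := hptil
  obtain ⟨hpst, hsupp⟩ := hstil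
  set U : E2 := ⟨ptil, memℓp_of_finsupp hfinp⟩ with hUdef
  have hUco : ∀ i, U i = ptil i := fun i => rfl
  obtain ⟨V, hVK, hVmin⟩ := exists_norm_eq_iInf_of_complete_convex
    ⟨0, zero_mem_KK⟩ isClosed_KK.isComplete convex_KK U
  have hVI : ∀ w ∈ KK, ⟪U - V, w - V⟫_ℝ ≤ 0 :=
    (norm_eq_iInf_iff_real_inner_le_zero convex_KK hVK).mp hVmin
  set vf : ℕ → ℝ := fun i => V i with hvfdef
  have hc : ConvexNat vf := hVK.1
  have h0 : ∀ i, 0 ≤ vf i := hVK.2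
  have ht : Filter.Tendsto vf Filter.atTop (nhds 0) :=
    tendsto_of_sq_summable h0 (summable_sq_of_mem V)
  -- triangular elements
  have hTco : ∀ n i, (⟨Tfun n, Tfun_memℓp n⟩ : E2) i = Tfun n i := fun n i => rfl
  -- the basic inner product inequality
  have hinner_gam : ∀ n : ℕ, ⟪V - U, (⟨Tfun n, Tfun_memℓp n⟩ : E2)⟫_ℝ = gam ptil vf n := by
    intro n
    rw [inner_E2]
    have hterms : ∀ i, (V - U) i * (⟨Tfun n, Tfun_memℓp n⟩ : E2) i
        = (vf i - ptil i) * Tfun n i := by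
      intro i
      have h1 : (V - U) i = V i - U i := by rw [lp.coeFn_sub, Pi.sub_apply]
      rw [h1, hUco]
    have hvanish : ∀ i ∉ Finset.range (n+1),
        (V - U) i * (⟨Tfun n, Tfun_memℓp n⟩ : E2) i = 0 := by
      intro i hi
      rw [hterms i, Tfun_eq_zero (by simpa using hi), mul_zero]
    rw [tsum_eq_sum hvanish, gam_weighted]
    apply Finset.sum_congr rfl
    intro i _
    rw [hterms i]; ring
  have hγpos : ∀ n, 0 ≤ gam ptil vf n := by
    intro n
    set Tn : E2 := ⟨Tfun n, Tfun_memℓp n⟩ with hTn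
    have hmem : V + Tn ∈ KK := by
      constructor
      · have : ∀ i, (V + Tn) i = vf i + Tfun n i := by
          intro i; rw [lp.coeFn_add, Pi.add_apply]
        intro i
        simp only [this]
        have := hc i; have := Tfun_convex n i
        try simp only at this ⊢
        linarith [hc i, Tfun_convex n i]
      · intro i
        have : (V + Tn) i = vf i + Tfun n i := by
          rw [lp.coeFn_add, Pi.add_apply]
        rw [this]
        exact add_nonneg (h0 i) (Tfun_nonneg n i)
    have := hVI (V + Tn) hmem
    rw [add_sub_cancel_left] at this
    have hswap : ⟪V - U, Tn⟫_ℝ = -⟪U - V, Tn⟫_ℝ := by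
      rw [← inner_neg_left, neg_sub]
    rw [← hinner_gam n, hswap]
    linarith
  have hknot : ∀ n, cc vf n ≠ 0 → gam ptil vf n = 0 := by
    intro n hne
    have hccpos : 0 < cc vf n := lt_of_le_of_ne (hc n) (Ne.symm hne)
    set Tn : E2 := ⟨Tfun n, Tfun_memℓp n⟩ with hTn
    have hmem : V - cc vf n • Tn ∈ KK := by
      have hcoe : ∀ i, (V - cc vf n • Tn) i = vf i - cc vf n * Tfun n i := by
        intro i
        rw [lp.coeFn_sub, Pi.sub_apply, lp.coeFn_smul, Pi.smul_apply]
        simp [smul_eq_mul]; rfl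
      constructor
      · intro i
        simp only [hcoe]
        have hT := Tfun_sec n i
        have hv := hc i
        by_cases hin : i = n
        · rw [hin] at hT ⊢
          have hT1 : Tfun n (n+2) - 2 * Tfun n (n+1) + Tfun n n = 1 := by
            rw [Tfun_sec]; simp
          have hkey : cc vf n * (Tfun n (n+2) - 2 * Tfun n (n+1) + Tfun n n) = cc vf n := by
            rw [hT1]; ring
          have hccrfl : cc vf n = vf (n+2) - 2 * vf (n+1) + vf n := rfl
          linarith [hkey, hccrfl.le, hccrfl.ge]
        · have hT0 : Tfun n (i+2) - 2 * Tfun n (i+1) + Tfun n i = 0 := by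
            rw [Tfun_sec]; simp [hin]
          have hkey : cc vf n * (Tfun n (i+2) - 2 * Tfun n (i+1) + Tfun n i) = 0 := by
            rw [hT0]; ring
          linarith [hkey, hv]
      · intro i
        rw [hcoe]
        have hlow := v_lower hc h0 ht n i
        have hccD : cc vf n ≤ Dd vf n := by
          rw [cc_eq_Dd]
          have := Dd_nonneg hc ht (n+1)
          linarith
        have hTnn := Tfun_nonneg n i
        nlinarith [mul_le_mul_of_nonneg_right hccD hTnn, hlow,
          mul_comm (Tfun n i) (Dd vf n)]
    have h1 := hVI _ hmem
    rw [sub_sub_cancel_left] at h1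
    rw [inner_neg_right, real_inner_smul_right] at h1
    have h2 := hγpos n
    rw [← hinner_gam n]
    have hswap : ⟪V - U, Tn⟫_ℝ = -⟪U - V, Tn⟫_ℝ := by
      rw [← inner_neg_left, neg_sub]
    rw [← hinner_gam n, hswap] at h2
    have h3 : 0 ≤ ⟪U - V, Tn⟫_ℝ := nonneg_of_mul_nonneg_right (by linarith) hccpos
    rw [hswap]
    linarith
  -- apply the combinatorial main lemma
  obtain ⟨nh, hvz, hvnh, hstnh, hsum1⟩ :=
    comb_main ptil vf stil h0p hsump hsupp hpst hc h0 ht hγpos hknot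
  -- properties of vf
  have hsupp_fin : (Function.support vf).Finite := by
    apply Set.Finite.subset (Set.finite_Iic nh)
    intro i hi
    simp only [Function.mem_support] at hi
    simp only [Set.mem_Iic]
    by_contra hgt
    exact hi (hvz i (by omega))
  have htsum1 : ∑' i, vf i = 1 := by
    rw [tsum_eq_sum (s := Finset.range (nh+1)) (fun i hi => hvz i (by
      simp only [Finset.mem_range] at hi; omega))]
    exact hsum1
  have hMemC : MemC vf := ⟨⟨hc, h0, ht⟩, htsum1⟩
  have hsq : Summable (fun i => vf i ^ 2) := summable_sq_of_mem V
  -- minimality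
  have hmin2 : ∀ p : ℕ → ℝ, MemK p → Summable (fun i => (p i) ^ 2) →
      Crit ptil vf ≤ Crit ptil p := by
    intro p hK hS
    set P : E2 := ⟨p, memℓp_two_of_sq hS⟩ with hP
    have hPK : P ∈ KK := ⟨hK.1, hK.2.1⟩
    have hle : ‖U - V‖ ≤ ‖U - P‖ := by
      rw [hVmin]
      exact ciInf_le ⟨0, by rintro x ⟨w, rfl⟩; exact norm_nonneg _⟩ (⟨P, hPK⟩ : ↥KK)
    have hcv : Crit ptil vf = 1/2 * ‖V - U‖^2 - 1/2 * ‖U‖^2 := crit_norm ptil U hUco V vf (fun i => rfl)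
    have hcp : Crit ptil p = 1/2 * ‖P - U‖^2 - 1/2 * ‖U‖^2 := crit_norm ptil U hUco P p (fun i => rfl)
    rw [hcv, hcp]
    have h1 : ‖V - U‖ ≤ ‖P - U‖ := by
      rw [norm_sub_rev V U, norm_sub_rev P U]; exact hle
    have h2 : ‖V - U‖^2 ≤ ‖P - U‖^2 := by
      apply pow_le_pow_left₀ (norm_nonneg _) h1
    linarith
  have hmin1 : ∀ p : ℕ → ℝ, MemC p → Crit ptil vf ≤ Crit ptil p := by
    intro p hp
    exact hmin2 p hp.1 (summable_sq_of_memC hp)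
  refine ⟨vf, ⟨hMemC, hsq, hmin1, hmin2, hsupp_fin,
    ⟨nh, ⟨⟨hvnh, fun i hi => by
      by_contra hgt
      exact hi (hvz i (by omega))⟩, hstnh⟩⟩⟩, ?_⟩
  -- uniqueness
  rintro q ⟨hqC, hqS, _, hqmin2, _, _⟩
  set Qe : E2 := ⟨q, memℓp_two_of_sq hqS⟩ with hQ
  have hQK : Qe ∈ KK := ⟨hqC.1.1, hqC.1.2.1⟩
  have hEq : Crit ptil q = Crit ptil vf :=
    le_antisymm (hqmin2 vf ⟨hc, h0, ht⟩ hsq) (hmin2 q hqC.1 hqS)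
  have hcq : Crit ptil q = 1/2 * ‖Qe - U‖^2 - 1/2 * ‖U‖^2 := crit_norm ptil U hUco Qe q (fun i => rfl)
  have hcv : Crit ptil vf = 1/2 * ‖V - U‖^2 - 1/2 * ‖U‖^2 := crit_norm ptil U hUco V vf (fun i => rfl)
  have hnormeq : ‖U - Qe‖ = ‖U - V‖ := by
    rw [hcq, hcv] at hEq
    have h1 : ‖Qe - U‖^2 = ‖V - U‖^2 := by linarith
    have h2 : ‖Qe - U‖ = ‖V - U‖ := by
      nlinarith [norm_nonneg (Qe - U), norm_nonneg (V - U), sq_nonneg (‖Qe - U‖ - ‖V - U‖),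
        sq_nonneg (‖Qe - U‖ + ‖V - U‖)]
    rw [norm_sub_rev U Qe, norm_sub_rev U V, h2]
  -- midpoint argument
  have hmid : ((1:ℝ)/2) • Qe + ((1:ℝ)/2) • V ∈ KK :=
    convex_KK hQK hVK (by norm_num) (by norm_num) (by norm_num)
  have hmid_ge : ‖U - V‖ ≤ ‖U - (((1:ℝ)/2) • Qe + ((1:ℝ)/2) • V)‖ := by
    rw [hVmin]
    exact ciInf_le ⟨0, by rintro x ⟨w, rfl⟩; exact norm_nonneg _⟩ (⟨_, hmid⟩ : ↥KK)
  have hpar := parallelogram_law_with_norm ℝ (U - Qe) (U - V)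
  have hab : (U - Qe) + (U - V) = (2:ℝ) • (U - (((1:ℝ)/2) • Qe + ((1:ℝ)/2) • V)) := by
    module
  have hsub : (U - Qe) - (U - V) = V - Qe := by abel
  rw [hab, hsub, norm_smul] at hpar
  have h2n : ‖(2:ℝ)‖ = 2 := by norm_num
  rw [h2n] at hpar
  have hVQ : ‖V - Qe‖^2 ≤ 0 := by
    have hterm : (2 * ‖U - (((1:ℝ)/2) • Qe + ((1:ℝ)/2) • V)‖)^2 ≥ (2 * ‖U - V‖)^2 := by
      have := hmid_ge
      nlinarith [norm_nonneg (U - V)]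
    rw [hnormeq] at hpar
    nlinarith [hpar]
  have hVQ0 : V - Qe = 0 := by
    rw [← norm_eq_zero]
    nlinarith [norm_nonneg (V - Qe), sq_nonneg ‖V - Qe‖]
  have hQV : Qe = V := by
    have := sub_eq_zero.mp hVQ0
    exact this.symm
  funext i
  have : Qe i = V i := by rw [hQV]
  exact this
end
end

section
/- Let p̃ be a probability mass function on ℕ with finite support and let p̂ be the constrained least squares estimator, i.e., the unique minimizer of Q over 𝒦. Then for every q ∈ 𝒦 with ∑_{j≥0} q(j)² < ∞ (in particular for every convex probability mass function q on ℕ), one has ∑_{j≥0} (q(j) − p̂(j))² ≤ ∑_{j≥0} (q(j) − p̃(j))², and the inequality is strict whenever p̃ is non-convex (i.e., p̃(l+1) − 2 p̃(l) + p̃(l−1) < 0 for some l ≥ 1). -/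
open scoped BigOperators

noncomputable section

/- Auxiliary lemmas -/

lemma summable_mul_of_sq {f g : ℕ → ℝ} (hf : Summable fun i => (f i) ^ 2)
    (hg : Summable fun i => (g i) ^ 2) : Summable fun i => f i * g i := by
  have hb : Summable fun i => (1 / 2) * ((f i) ^ 2 + (g i) ^ 2) :=
    (hf.add hg).mul_left (1 / 2)
  have hle : ∀ i, |f i * g i| ≤ (1 / 2) * ((f i) ^ 2 + (g i) ^ 2) := by
    intro i
    rw [abs_mul]
    nlinarith [sq_nonneg (|f i| - |g i|), sq_abs (f i), sq_abs (g i)]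
  exact Summable.of_abs (hb.of_nonneg_of_le (fun i => abs_nonneg _) hle)

lemma summable_sq_sub {f g : ℕ → ℝ} (hf : Summable fun i => (f i) ^ 2)
    (hg : Summable fun i => (g i) ^ 2) : Summable fun i => (f i - g i) ^ 2 := by
  have h1 : (fun i => (f i - g i) ^ 2)
      = fun i => ((f i) ^ 2 - 2 * (f i * g i)) + (g i) ^ 2 := by
    funext i; ring
  rw [h1]
  exact (hf.sub ((summable_mul_of_sq hf hg).mul_left 2)).add hg

/-- Theorem 2 (first part): the constrained LSE `p̂` is at least as close to any
square-summable `q ∈ 𝒦` as the empirical `p̃` is, strictly if `p̃` is non-convex. -/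
theorem stmt_2 (ptil : ℕ → ℝ) (hptil : IsFinPMF ptil)
    (phat : ℕ → ℝ) (hphatK : MemK phat)
    (hphat2 : Summable (fun i => (phat i) ^ 2))
    (hmin : ∀ f : ℕ → ℝ, MemK f → Summable (fun i => (f i) ^ 2) →
      Crit ptil phat ≤ Crit ptil f) :
    ∀ q : ℕ → ℝ, MemK q → Summable (fun j => (q j) ^ 2) →
      (∑' j, (q j - phat j) ^ 2 ≤ ∑' j, (q j - ptil j) ^ 2) ∧
      ((∃ l : ℕ, ptil (l + 2) - 2 * ptil (l + 1) + ptil l < 0) →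
        ∑' j, (q j - phat j) ^ 2 < ∑' j, (q j - ptil j) ^ 2) := by
  obtain ⟨hpos, hfin, hsum1⟩ := hptil
  have hptil2 : Summable fun i => (ptil i) ^ 2 := by
    apply summable_of_finite_support
    apply hfin.subset
    intro i hi
    simp only [Function.mem_support] at hi ⊢
    intro h
    apply hi
    rw [h]; ring
  intro q hqK hq2
  set r : ℕ → ℝ := fun i => q i - phat i with hr_def
  set e : ℕ → ℝ := fun i => phat i - ptil i with he_def
  have hr2 : Summable fun i => (r i) ^ 2 := summable_sq_sub hq2 hphat2
  have he2 : Summable fun i => (e i) ^ 2 := summable_sq_sub hphat2 hptil2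
  have hre : Summable fun i => r i * e i := summable_mul_of_sq hr2 he2
  have hpr : Summable fun i => phat i * r i := summable_mul_of_sq hphat2 hr2
  have hrt : Summable fun i => r i * ptil i := summable_mul_of_sq hr2 hptil2
  have hpt : Summable fun i => phat i * ptil i := summable_mul_of_sq hphat2 hptil2
  set A : ℝ := ∑' i, r i * e i with hA_def
  set B : ℝ := ∑' i, (r i) ^ 2 with hB_def
  have hB0 : 0 ≤ B := tsum_nonneg fun i => sq_nonneg _
  have hA_eq : A = (∑' i, phat i * r i) - ∑' i, r i * ptil i := by
    rw [hA_def, ← Summable.tsum_sub hpr hrt]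
    congr 1; funext i; simp only [he_def]; ring
  -- key inequality from minimality
  have key : ∀ t : ℝ, 0 ≤ t → t ≤ 1 → 0 ≤ t * A + t ^ 2 * (B / 2) := by
    intro t ht0 ht1
    set f : ℕ → ℝ := fun i => phat i + t * r i with hf_def
    have hf2 : Summable fun i => (f i) ^ 2 := by
      have : (fun i => (f i) ^ 2)
          = fun i => ((phat i) ^ 2 + (2 * t) * (phat i * r i)) + t ^ 2 * (r i) ^ 2 := by
        funext i; simp only [hf_def]; ring
      rw [this]
      exact (hphat2.add (hpr.mul_left _)).add (hr2.mul_left _)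
    have hfK : MemK f := by
      refine ⟨fun i => ?_, fun i => ?_, ?_⟩
      · have h1 := hphatK.1 i
        have h2 := hqK.1 i
        simp only [hf_def, hr_def] at *
        nlinarith
      · have h1 := hphatK.2.1 i
        have h2 := hqK.2.1 i
        simp only [hf_def, hr_def]
        nlinarith
      · have : Filter.Tendsto (fun i => phat i + t * (q i - phat i))
            Filter.atTop (nhds (0 + t * (0 - 0))) :=
          (hphatK.2.2.add ((hqK.2.2.sub hphatK.2.2).const_mul t))
        simpa using this
    have hle := hmin f hfK hf2
    have hSf2 : (∑' i, (f i) ^ 2)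
        = (∑' i, (phat i) ^ 2) + (2 * t) * (∑' i, phat i * r i)
          + t ^ 2 * (∑' i, (r i) ^ 2) := by
      have h1 : (fun i => (f i) ^ 2)
          = fun i => ((phat i) ^ 2 + (2 * t) * (phat i * r i)) + t ^ 2 * (r i) ^ 2 := by
        funext i; simp only [hf_def]; ring
      rw [h1, Summable.tsum_add (hphat2.add (hpr.mul_left _)) (hr2.mul_left _),
        Summable.tsum_add hphat2 (hpr.mul_left _), tsum_mul_left, tsum_mul_left]
    have hSft : (∑' i, f i * ptil i)
        = (∑' i, phat i * ptil i) + t * (∑' i, r i * ptil i) := by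
      have h1 : (fun i => f i * ptil i)
          = fun i => phat i * ptil i + t * (r i * ptil i) := by
        funext i; simp only [hf_def]; ring
      rw [h1, Summable.tsum_add hpt (hrt.mul_left _), tsum_mul_left]
    simp only [Crit, hSf2, hSft] at hle
    rw [hA_eq, hB_def]
    linarith
  have hA0 : 0 ≤ A := by
    by_contra hA
    push_neg at hA
    set t : ℝ := min 1 (-A / (B + 1)) with ht_def
    have ht0 : 0 < t := lt_min one_pos (div_pos (by linarith) (by linarith))
    have ht1 : t ≤ 1 := min_le_left _ _
    have htle : t ≤ -A / (B + 1) := min_le_right _ _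
    have htB : t * (B + 1) ≤ -A :=
      (le_div_iff₀ (show (0:ℝ) < B + 1 by linarith)).mp htle
    have := key t ht0.le ht1
    nlinarith [mul_pos ht0 ht0]
  -- decomposition of the distance
  have hdecomp : (∑' j, (q j - ptil j) ^ 2)
      = (∑' j, (q j - phat j) ^ 2) + 2 * A + ∑' j, (e j) ^ 2 := by
    have h1 : (fun j => (q j - ptil j) ^ 2)
        = fun j => ((r j) ^ 2 + 2 * (r j * e j)) + (e j) ^ 2 := by
      funext j; simp only [hr_def, he_def]; ring
    rw [h1, Summable.tsum_add (hr2.add (hre.mul_left 2)) he2, Summable.tsum_add hr2 (hre.mul_left 2),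
      tsum_mul_left, hA_def]
  have hE0 : 0 ≤ ∑' j, (e j) ^ 2 := tsum_nonneg fun j => sq_nonneg _
  constructor
  · rw [hdecomp]; linarith
  · rintro ⟨l, hl⟩
    have hne : ∃ j, 0 < (e j) ^ 2 := by
      by_contra h
      push_neg at h
      have hz : ∀ j, phat j = ptil j := by
        intro j
        have := h j
        have h2 : (e j) ^ 2 = 0 := le_antisymm this (sq_nonneg _)
        have := pow_eq_zero_iff (n := 2) (by norm_num) |>.mp h2
        simp only [he_def] at this
        linarith
      have := hphatK.1 l
      rw [hz l, hz (l + 1), hz (l + 2)] at this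
      linarith
    obtain ⟨j, hj⟩ := hne
    have hEpos : 0 < ∑' j, (e j) ^ 2 :=
      Summable.tsum_pos he2 (fun i => sq_nonneg _) j hj
    rw [hdecomp]; linarith
end
end

section
/- Let p̃ be a probability mass function on ℕ with finite support and p̂ the constrained least squares estimator. Then the two distributions have the same mean: ∑_{i≥1} i · p̃(i) = ∑_{i≥1} i · p̂(i). -/
open scoped BigOperators

noncomputable section

/-! ### Auxiliary material -/

/-- triangular test functions `i ↦ (s - i)₊` -/
def gfun (s i : ℕ) : ℝ := max ((s : ℝ) - i) 0

lemma gfun_nonneg (s i : ℕ) : 0 ≤ gfun s i := le_max_right _ _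

lemma gfun_eq_zero {s i : ℕ} (h : s ≤ i) : gfun s i = 0 := by
  have : (s : ℝ) - i ≤ 0 := by
    have : (s:ℝ) ≤ i := by exact_mod_cast h
    linarith
  simp [gfun, max_eq_right this]

lemma gfun_eq {s i : ℕ} (h : i ≤ s) : gfun s i = (s : ℝ) - i := by
  have : (0:ℝ) ≤ (s:ℝ) - i := by
    have : (i:ℝ) ≤ s := by exact_mod_cast h
    linarith
  simp [gfun, max_eq_left this]

lemma max_half (a : ℝ) : max a 0 = (a + |a|) / 2 := by
  rcases le_total a 0 with h | h
  · rw [max_eq_right h, abs_of_nonpos h]; ring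
  · rw [max_eq_left h, abs_of_nonneg h]; ring

lemma gfun_convex (s : ℕ) : ConvexNat (gfun s) := by
  intro i
  have h2 : ∀ j : ℕ, gfun s j = (((s:ℝ) - j) + |(s:ℝ) - j|) / 2 := fun j => max_half _
  rw [h2, h2, h2]
  have habs : |2 * ((s:ℝ) - (i+1))| ≤ |(s:ℝ) - (i+2)| + |(s:ℝ) - i| := by
    have : 2 * ((s:ℝ) - (i+1)) = ((s:ℝ) - (i+2)) + ((s:ℝ) - i) := by push_cast; ring
    rw [this]; exact abs_add_le _ _
  have := abs_mul 2 ((s:ℝ) - (i+1))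
  rw [abs_two] at this
  push_cast
  push_cast at habs this
  nlinarith [abs_nonneg ((s:ℝ) - (i+1))]

lemma gfun_memK (s : ℕ) : MemK (gfun s) := by
  refine ⟨gfun_convex s, gfun_nonneg s, ?_⟩
  refine Filter.Tendsto.congr' ?_ tendsto_const_nhds
  filter_upwards [Filter.eventually_ge_atTop s] with i hi
  exact (gfun_eq_zero hi).symm

lemma summable_of_ev (f : ℕ → ℝ) (N : ℕ) (h : ∀ i, N ≤ i → f i = 0) : Summable f := by
  apply summable_of_ne_finset_zero (s := Finset.range N)
  intro i hi
  exact h i (by simpa using hi)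

/-- monotonicity of elements of K -/
lemma memK_antitone (f : ℕ → ℝ) (hf : MemK f) : ∀ i, f (i + 1) ≤ f i := by
  obtain ⟨hc, hnn, hto⟩ := hf
  intro N
  by_contra hlt
  push_neg at hlt
  have hb : ∀ j, N ≤ j → f j - f (j+1) ≤ f N - f (N+1) := by
    intro j hj
    induction j with
    | zero => simp_all
    | succ n ih =>
      rcases Nat.lt_or_ge N (n+1) with h1 | h1
      · have hn : N ≤ n := Nat.lt_succ_iff.mp h1
        have := hc n
        have := ih hn
        linarith
      · have : N = n + 1 := le_antisymm hj h1
        simp [this]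
  have hmono : ∀ j, N + 1 ≤ j → f (N+1) ≤ f j := by
    intro j hj
    induction j with
    | zero => omega
    | succ n ih =>
      rcases Nat.lt_or_ge (N+1) (n+1) with h1 | h1
      · have hn : N + 1 ≤ n := Nat.lt_succ_iff.mp h1
        have h2 := hb n (by omega)
        have := ih hn
        linarith
      · have : N + 1 = n + 1 := le_antisymm hj h1
        simp [this]
  have : (0:ℝ) ≥ f (N+1) := by
    apply ge_of_tendsto hto
    filter_upwards [Filter.eventually_ge_atTop (N+1)] with j hj
    exact hmono j hj
  have := hnn N
  linarith

lemma crit_expand (ptil phat : ℕ → ℝ) (hptil : (Function.support ptil).Finite)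
    (hphat2 : Summable (fun i => (phat i)^2))
    (g : ℕ → ℝ) (N : ℕ) (hg : ∀ i, N ≤ i → g i = 0) (t : ℝ) :
    Crit ptil (fun i => phat i + t * g i) =
      Crit ptil phat + t * (∑ i ∈ Finset.range N, (phat i - ptil i) * g i)
        + t^2/2 * (∑ i ∈ Finset.range N, (g i)^2) := by
  set h : ℕ → ℝ := fun i => 2*t*(phat i * g i) + t^2*(g i)^2 with hh
  have hhev : ∀ i, N ≤ i → h i = 0 := by intro i hi; simp [hh, hg i hi]
  have hsumh : Summable h := summable_of_ev h N hhev
  have e1 : ∑' i, (phat i + t * g i)^2 = (∑' i, (phat i)^2) + ∑ i ∈ Finset.range N, h i := by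
    have : (fun i => (phat i + t * g i)^2) = fun i => (phat i)^2 + h i := by
      funext i; simp only [hh]; ring
    rw [this, hphat2.tsum_add hsumh]
    congr 1
    exact tsum_eq_sum (by intro i hi; exact hhev i (by simpa using hi))
  have hsump : Summable (fun i => phat i * ptil i) := by
    apply summable_of_ne_finset_zero (s := hptil.toFinset)
    intro i hi
    have : ptil i = 0 := by
      by_contra hne
      exact hi (hptil.mem_toFinset.mpr hne)
    simp [this]
  have hsumg : Summable (fun i => t * (g i * ptil i)) :=
    summable_of_ev _ N (by intro i hi; simp [hg i hi])
  have e2 : ∑' i, (phat i + t * g i) * ptil i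
      = (∑' i, phat i * ptil i) + ∑ i ∈ Finset.range N, t * (g i * ptil i) := by
    have : (fun i => (phat i + t * g i) * ptil i)
        = fun i => phat i * ptil i + t * (g i * ptil i) := by
      funext i; ring
    rw [this, hsump.tsum_add hsumg]
    congr 1
    exact tsum_eq_sum (by intro i hi; simp [hg i (by simpa using hi)])
  have key : (1:ℝ)/2 * (∑ i ∈ Finset.range N, h i) - ∑ i ∈ Finset.range N, t * (g i * ptil i)
      = t * (∑ i ∈ Finset.range N, (phat i - ptil i) * g i)
        + t^2/2 * (∑ i ∈ Finset.range N, (g i)^2) := by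
    rw [Finset.mul_sum, Finset.mul_sum, Finset.mul_sum, ← Finset.sum_sub_distrib,
      ← Finset.sum_add_distrib]
    apply Finset.sum_congr rfl
    intro i _
    simp only [hh]; ring
  simp only [Crit, e1, e2]
  linarith [key]

lemma memK_add (phat g : ℕ → ℝ) (hphat : MemK phat) (hg : MemK g) (t : ℝ) (ht : 0 ≤ t) :
    MemK (fun i => phat i + t * g i) := by
  refine ⟨?_, ?_, ?_⟩
  · intro i
    have h1 := hphat.1 i
    have h2 := hg.1 i
    simp only
    nlinarith
  · intro i
    have := hphat.2.1 i
    have := hg.2.1 i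
    positivity
  · have : Filter.Tendsto (fun i => phat i + t * g i) Filter.atTop (nhds (0 + t * 0)) :=
      hphat.2.2.add (hg.2.2.const_mul t)
    simpa using this

lemma summable_sq_pert (phat g : ℕ → ℝ) (hphat2 : Summable (fun i => (phat i)^2))
    (N : ℕ) (hg : ∀ i, N ≤ i → g i = 0) (t : ℝ) :
    Summable (fun i => (phat i + t * g i)^2) := by
  have : (fun i => (phat i + t * g i)^2)
      = fun i => (phat i)^2 + (2*t*(phat i * g i) + t^2*(g i)^2) := by
    funext i; ring
  rw [this]
  refine hphat2.add ?_
  apply summable_of_ne_finset_zero (s := Finset.range N)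
  intro i hi
  simp [hg i (by simpa using hi)]

lemma E_nonneg (ptil phat : ℕ → ℝ) (hptfin : (Function.support ptil).Finite)
    (hphatK : MemK phat) (hphat2 : Summable (fun i => (phat i)^2))
    (hmin : ∀ f : ℕ → ℝ, MemK f → Summable (fun i => (f i) ^ 2) →
      Crit ptil phat ≤ Crit ptil f)
    (g : ℕ → ℝ) (N : ℕ) (hgK : MemK g) (hg : ∀ i, N ≤ i → g i = 0) :
    0 ≤ ∑ i ∈ Finset.range N, (phat i - ptil i) * g i := by
  set E := ∑ i ∈ Finset.range N, (phat i - ptil i) * g i with hE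
  set G := ∑ i ∈ Finset.range N, (g i)^2 with hG
  have hGnn : 0 ≤ G := Finset.sum_nonneg (fun i _ => sq_nonneg _)
  have hball : ∀ t : ℝ, 0 < t → 0 ≤ t * E + t^2/2 * G := by
    intro t ht
    have hK := memK_add phat g hphatK hgK t (le_of_lt ht)
    have hS := summable_sq_pert phat g hphat2 N hg t
    have h := hmin _ hK hS
    rw [crit_expand ptil phat hptfin hphat2 g N hg t] at h
    linarith
  by_contra hEneg
  push_neg at hEneg
  rcases eq_or_lt_of_le hGnn with hG0 | hG0
  · have := hball 1 one_pos
    nlinarith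
  · have ht : 0 < -E / G := div_pos (neg_pos.mpr hEneg) hG0
    have h := hball _ ht
    have hGne : G ≠ 0 := ne_of_gt hG0
    have heq : (-E/G) * E + (-E/G)^2/2 * G = -(E^2/G)/2 := by
      field_simp
      ring
    rw [heq] at h
    have hE2 : 0 < E^2 := by nlinarith
    have := div_pos hE2 hG0
    linarith

lemma E_nonpos (ptil phat : ℕ → ℝ) (hptfin : (Function.support ptil).Finite)
    (hphat2 : Summable (fun i => (phat i)^2))
    (hmin : ∀ f : ℕ → ℝ, MemK f → Summable (fun i => (f i) ^ 2) →
      Crit ptil phat ≤ Crit ptil f)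
    (g : ℕ → ℝ) (N : ℕ) (hg : ∀ i, N ≤ i → g i = 0)
    (ε : ℝ) (hε : 0 < ε)
    (hfeas : ∀ t : ℝ, 0 < t → t ≤ ε → MemK (fun i => phat i + (-t) * g i)) :
    ∑ i ∈ Finset.range N, (phat i - ptil i) * g i ≤ 0 := by
  set E := ∑ i ∈ Finset.range N, (phat i - ptil i) * g i with hE
  set G := ∑ i ∈ Finset.range N, (g i)^2 with hG
  have hGnn : 0 ≤ G := Finset.sum_nonneg (fun i _ => sq_nonneg _)
  have hball : ∀ t : ℝ, 0 < t → t ≤ ε → 0 ≤ -(t * E) + t^2/2 * G := by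
    intro t ht htle
    have hK := hfeas t ht htle
    have hS := summable_sq_pert phat g hphat2 N hg (-t)
    have h := hmin _ hK hS
    rw [crit_expand ptil phat hptfin hphat2 g N hg (-t)] at h
    nlinarith [h]
  by_contra hEpos
  push_neg at hEpos
  rcases eq_or_lt_of_le hGnn with hG0 | hG0
  · have := hball ε hε le_rfl
    nlinarith
  · set t := min ε (E/G) with htdef
    have htpos : 0 < t := lt_min hε (div_pos hEpos hG0)
    have h := hball t htpos (min_le_left _ _)
    have htle : t * G ≤ E := by
      have h2 : t ≤ E/G := min_le_right _ _
      calc t * G ≤ (E/G) * G := by nlinarith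
        _ = E := by field_simp
    nlinarith

lemma gfun_dd (j i : ℕ) :
    gfun (j+1) (i+2) - 2 * gfun (j+1) (i+1) + gfun (j+1) i = if i = j then 1 else 0 := by
  rcases lt_trichotomy i j with h | h | h
  · rw [if_neg (ne_of_lt h), gfun_eq (by omega), gfun_eq (by omega), gfun_eq (by omega)]
    push_cast; ring
  · subst h
    rw [if_pos rfl, gfun_eq_zero (by omega), gfun_eq_zero (by omega), gfun_eq (by omega)]
    push_cast; ring
  · rw [if_neg (ne_of_gt h), gfun_eq_zero (by omega), gfun_eq_zero (by omega),
      gfun_eq_zero (by omega)]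
    ring

lemma memK_sub_gfun (phat : ℕ → ℝ) (hphat : MemK phat) (j : ℕ)
    (hpos : 0 < phat j) (hmono : ∀ a b, a ≤ b → phat b ≤ phat a)
    (hc : 0 < phat (j+2) - 2*phat (j+1) + phat j) :
    ∃ ε : ℝ, 0 < ε ∧ ∀ t : ℝ, 0 < t → t ≤ ε →
      MemK (fun i => phat i + (-t) * gfun (j+1) i) := by
  set c := phat (j+2) - 2*phat (j+1) + phat j with hcdef
  refine ⟨min (phat j / (j+1)) c, lt_min (by positivity) hc, ?_⟩
  intro t ht htle
  have htc : t ≤ c := le_trans htle (min_le_right _ _)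
  have htj : t ≤ phat j / (j+1) := le_trans htle (min_le_left _ _)
  refine ⟨?_, ?_, ?_⟩
  · intro i
    simp only
    have hdd := gfun_dd j i
    have hkey : (phat (i+2) + -t * gfun (j+1) (i+2)) - 2*(phat (i+1) + -t * gfun (j+1) (i+1))
        + (phat i + -t * gfun (j+1) i)
        = (phat (i+2) - 2*phat (i+1) + phat i)
          - t*(gfun (j+1) (i+2) - 2*gfun (j+1) (i+1) + gfun (j+1) i) := by ring
    rw [hkey, hdd]
    by_cases hij : i = j
    · subst hij
      rw [if_pos rfl]
      rw [hcdef] at htc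
      linarith
    · rw [if_neg hij]
      have := hphat.1 i
      linarith
  · intro i
    simp only
    rcases le_or_gt i j with hij | hij
    · have hg : gfun (j+1) i = ((j:ℝ)+1) - i := by
        rw [gfun_eq (by omega)]; push_cast; ring
      have hgle : gfun (j+1) i ≤ (j:ℝ)+1 := by
        rw [hg]
        have : (0:ℝ) ≤ i := Nat.cast_nonneg i
        linarith
      have hpi : phat j ≤ phat i := hmono i j hij
      have hj1 : (0:ℝ) < (j:ℝ)+1 := by positivity
      have h1 : t * ((j:ℝ)+1) ≤ phat j := (le_div_iff₀ hj1).mp htj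
      have hg0 : 0 ≤ gfun (j+1) i := le_max_right _ _
      nlinarith
    · rw [gfun_eq_zero (by omega)]
      have := hphat.2.1 i
      linarith
  · have : Filter.Tendsto (fun i => phat i + (-t) * gfun (j+1) i) Filter.atTop
        (nhds (0 + (-t) * 0)) := by
      refine hphat.2.2.add (Filter.Tendsto.const_mul _ ?_)
      refine Filter.Tendsto.congr' ?_ tendsto_const_nhds
      filter_upwards [Filter.eventually_ge_atTop (j+1)] with i hi
      exact (gfun_eq_zero hi).symm
    simpa using this

/-- Theorem 3 (means): the empirical distribution `p̃` and the constrained LSE `p̂`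
have the same mean. -/
theorem stmt_6 (ptil : ℕ → ℝ) (hptil : IsFinPMF ptil)
    (phat : ℕ → ℝ) (hphatK : MemK phat)
    (hphat2 : Summable (fun i => (phat i) ^ 2))
    (hmin : ∀ f : ℕ → ℝ, MemK f → Summable (fun i => (f i) ^ 2) →
      Crit ptil phat ≤ Crit ptil f) :
    ∑' i : ℕ, (i : ℝ) * ptil i = ∑' i : ℕ, (i : ℝ) * phat i := by
  obtain ⟨hpt_nn, hpt_fin, hpt_sum⟩ := hptil
  obtain ⟨m, hm⟩ : ∃ m : ℕ, ∀ i, m ≤ i → ptil i = 0 := by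
    refine ⟨(hpt_fin.toFinset.sup id) + 1, fun i hi => ?_⟩
    by_contra hne
    have h1 : i ∈ hpt_fin.toFinset := hpt_fin.mem_toFinset.mpr hne
    have h2 := Finset.le_sup (f := id) h1
    simp only [id] at h2
    omega
  have hmono : ∀ a b : ℕ, a ≤ b → phat b ≤ phat a := fun a b hab =>
    antitone_nat_of_succ_le (memK_antitone phat hphatK) hab
  set d : ℕ → ℝ := fun i => phat i - ptil i with hd
  set T : ℕ → ℝ := fun s => ∑ i ∈ Finset.range s, ((s:ℝ) - i) * d i with hTdef
  set D : ℕ → ℝ := fun s => ∑ i ∈ Finset.range (s+1), d i with hDdef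
  have hTg : ∀ s : ℕ, T s = ∑ i ∈ Finset.range s, (phat i - ptil i) * gfun s i := by
    intro s
    apply Finset.sum_congr rfl
    intro i hi
    rw [gfun_eq (le_of_lt (Finset.mem_range.mp hi))]
    simp only [hd]
    ring
  have hTnn : ∀ s, 0 ≤ T s := by
    intro s
    rw [hTg s]
    exact E_nonneg ptil phat hpt_fin hphatK hphat2 hmin (gfun s) s (gfun_memK s)
      (fun i hi => gfun_eq_zero hi)
  have hTknot : ∀ j, 0 < phat j → 0 < phat (j+2) - 2*phat (j+1) + phat j → T (j+1) = 0 := by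
    intro j hpos hc
    obtain ⟨ε, hε, hfeas⟩ := memK_sub_gfun phat hphatK j hpos hmono hc
    have hle := E_nonpos ptil phat hpt_fin hphat2 hmin (gfun (j+1)) (j+1)
      (fun i hi => gfun_eq_zero hi) ε hε hfeas
    have hge := hTnn (j+1)
    have heq := hTg (j+1)
    linarith
  have hTD : ∀ s : ℕ, T (s+1) = T s + D s := by
    intro s
    have h1 : T (s+1) = ∑ i ∈ Finset.range (s+1), (((s:ℝ) - i) * d i + d i) := by
      simp only [hTdef]
      apply Finset.sum_congr rfl
      intro i _
      push_cast
      ring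
    rw [h1, Finset.sum_add_distrib,
      Finset.sum_range_succ (f := fun i => ((s:ℝ) - (i:ℝ)) * d i)]
    have h2 : ((s:ℝ) - (s:ℝ)) * d s = 0 := by ring
    rw [h2]
    simp only [hTdef, hDdef]
    ring
  have hDrec : ∀ s : ℕ, D (s+1) = D s + d (s+1) := by
    intro s
    simp only [hDdef]
    exact Finset.sum_range_succ _ _
  by_cases hzero : ∃ n, phat n = 0
  · by_cases h0 : phat 0 = 0
    · -- phat ≡ 0 : impossible
      exfalso
      have hall : ∀ i, phat i = 0 := by
        intro i
        have h1 := hmono 0 i (Nat.zero_le i)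
        have h2 := hphatK.2.1 i
        rw [h0] at h1
        linarith
      obtain ⟨i0, hi0⟩ : ∃ i0, ptil i0 ≠ 0 := by
        by_contra hcc
        push_neg at hcc
        simp [hcc] at hpt_sum
      have hi0pos : 0 < ptil i0 := lt_of_le_of_ne (hpt_nn i0) (Ne.symm hi0)
      have hTval : T (i0+1) = -∑ i ∈ Finset.range (i0+1), ((↑(i0+1):ℝ) - i) * ptil i := by
        simp only [hTdef, hd]
        rw [← Finset.sum_neg_distrib]
        apply Finset.sum_congr rfl
        intro i _
        rw [hall i]
        ring
      have hterm : ∀ i ∈ Finset.range (i0+1), 0 ≤ ((↑(i0+1):ℝ) - i) * ptil i := by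
        intro i hi
        have h1 : (i:ℝ) ≤ i0 := by exact_mod_cast Nat.lt_succ_iff.mp (Finset.mem_range.mp hi)
        have h2 := hpt_nn i
        push_cast
        nlinarith
      have hsingle : ((↑(i0+1):ℝ) - i0) * ptil i0
          ≤ ∑ i ∈ Finset.range (i0+1), ((↑(i0+1):ℝ) - i) * ptil i :=
        Finset.single_le_sum hterm (Finset.self_mem_range_succ i0)
      have h3 : ((↑(i0+1):ℝ) - i0) = 1 := by push_cast; ring
      rw [h3, one_mul] at hsingle
      have := hTnn (i0+1)
      linarith
    · -- k : top of the support of phat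
      have hn0 := Nat.find_spec hzero
      have hn0pos : Nat.find hzero ≠ 0 := by
        intro h
        rw [h] at hn0
        exact h0 hn0
      obtain ⟨k, hk⟩ : ∃ k, Nat.find hzero = k + 1 := Nat.exists_eq_succ_of_ne_zero hn0pos
      have hpk : 0 < phat k := by
        have hne : phat k ≠ 0 := Nat.find_min hzero (by omega)
        exact lt_of_le_of_ne (hphatK.2.1 k) (Ne.symm hne)
      have hp0 : ∀ i, k+1 ≤ i → phat i = 0 := by
        intro i hi
        have h1 : phat i ≤ phat (k+1) := hmono (k+1) i hi
        have h2 := hphatK.2.1 i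
        rw [hk] at hn0
        linarith
      have hknotk : 0 < phat (k+2) - 2*phat (k+1) + phat k := by
        rw [hp0 (k+2) (by omega), hp0 (k+1) le_rfl]
        linarith
      have hTk1 : T (k+1) = 0 := hTknot k hpk hknotk
      have hP : ∀ r : ℕ, T (k+1+r) = 0 ∧ D (k+r) ≤ 0 := by
        intro r
        induction r with
        | zero =>
          refine ⟨by simpa using hTk1, ?_⟩
          have h1 := hTD k
          have h2 := hTnn k
          simp only [Nat.add_zero]
          linarith
        | succ n ih =>
          obtain ⟨ihT, ihD⟩ := ih
          have hdneg : d (k+n+1) ≤ 0 := by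
            simp only [hd]
            rw [hp0 (k+n+1) (by omega)]
            have := hpt_nn (k+n+1)
            linarith
          have hDle : D (k+(n+1)) ≤ 0 := by
            have h1 := hDrec (k+n)
            have e : k+(n+1) = k+n+1 := by omega
            rw [e]
            linarith
          have hTle : T (k+1+(n+1)) = 0 := by
            have h1 := hTD (k+1+n)
            have e2 : k+1+n = k+(n+1) := by omega
            rw [e2] at h1 ihT
            have e' : k+1+(n+1) = k+(n+1)+1 := by omega
            rw [e']
            have h3 := hTnn (k+(n+1)+1)
            linarith
          exact ⟨hTle, hDle⟩
      have hT0 : ∀ r, T (k+1+r) = 0 := fun r => (hP r).1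
      have hD0 : ∀ r, D (k+1+r) = 0 := by
        intro r
        have h1 := hTD (k+1+r)
        have h2 := hT0 r
        have h3 := hT0 (r+1)
        have e : k+1+(r+1) = k+1+r+1 := by omega
        rw [e] at h3
        linarith
      have hDk : D k = 0 ∧ ptil (k+1) = 0 := by
        have h1 := hDrec k
        have h2 := hD0 0
        simp only [Nat.add_zero] at h2
        have h3 : d (k+1) = - ptil (k+1) := by
          simp only [hd]
          rw [hp0 (k+1) le_rfl]
          ring
        have h4 := (hP 0).2
        simp only [Nat.add_zero] at h4
        have h5 := hpt_nn (k+1)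
        constructor <;> linarith
      have hpt0 : ∀ i, k+1 ≤ i → ptil i = 0 := by
        intro i hi
        rcases eq_or_lt_of_le hi with he | hlt
        · rw [← he]
          exact hDk.2
        · have e : k+1+(i-k-2)+1 = i := by omega
          have h1 := hDrec (k+1+(i-k-2))
          rw [e] at h1
          have h2 := hD0 (i-k-2)
          have h3 := hD0 (i-k-1)
          have e2 : k+1+(i-k-1) = i := by omega
          rw [e2] at h3
          have h4 : d i = 0 := by linarith
          have h5 : phat i = 0 := hp0 i (by omega)
          simp only [hd] at h4
          linarith
      have hsum_d : ∑ i ∈ Finset.range (k+1), d i = 0 := by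
        have h1 := hDk.1
        simpa [hDdef] using h1
      have hsum_id : ∑ i ∈ Finset.range (k+1), (i:ℝ) * d i = 0 := by
        have h1 : T (k+1) = (↑(k+1):ℝ) * (∑ i ∈ Finset.range (k+1), d i)
            - ∑ i ∈ Finset.range (k+1), (i:ℝ) * d i := by
          simp only [hTdef]
          rw [Finset.mul_sum, ← Finset.sum_sub_distrib]
          apply Finset.sum_congr rfl
          intro i _
          ring
        rw [hsum_d, mul_zero, zero_sub] at h1
        linarith [hTk1]
      have hptz : ∀ i ∉ Finset.range (k+1), (i:ℝ) * ptil i = 0 := by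
        intro i hi
        rw [hpt0 i (by simpa using hi)]
        ring
      have hphz : ∀ i ∉ Finset.range (k+1), (i:ℝ) * phat i = 0 := by
        intro i hi
        rw [hp0 i (by simpa using hi)]
        ring
      rw [tsum_eq_sum hptz, tsum_eq_sum hphz]
      have hsub : ∑ i ∈ Finset.range (k+1), (i:ℝ) * phat i
          - ∑ i ∈ Finset.range (k+1), (i:ℝ) * ptil i
          = ∑ i ∈ Finset.range (k+1), (i:ℝ) * d i := by
        rw [← Finset.sum_sub_distrib]
        apply Finset.sum_congr rfl
        intro i _
        simp only [hd]
        ring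
      linarith
  · -- infinite support : contradiction
    exfalso
    push_neg at hzero
    have hppos : ∀ n, 0 < phat n := fun n => lt_of_le_of_ne (hphatK.2.1 n) (Ne.symm (hzero n))
    have hknots : ∀ N : ℕ, ∃ j, N ≤ j ∧ 0 < phat (j+2) - 2*phat (j+1) + phat j := by
      intro N
      by_contra hc
      push_neg at hc
      have hflat : ∀ j, N ≤ j → phat (j+2) - 2*phat (j+1) + phat j = 0 := fun j hj =>
        le_antisymm (hc j hj) (hphatK.1 j)
      have hslope : ∀ r : ℕ, phat (N+r) - phat (N+r+1) = phat N - phat (N+1) := by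
        intro r
        induction r with
        | zero => simp
        | succ n ih =>
          have h1 := hflat (N+n) (by omega)
          have e : N+(n+1) = N+n+1 := by omega
          rw [e]
          linarith
      have ht1 : Filter.Tendsto (fun r : ℕ => phat (N+r)) Filter.atTop (nhds 0) := by
        have h1 := hphatK.2.2.comp (Filter.tendsto_add_atTop_nat N)
        have e : (phat ∘ fun r : ℕ => r + N) = fun r : ℕ => phat (N+r) := by
          funext r
          simp [Nat.add_comm]
        rwa [e] at h1
      have ht1' : Filter.Tendsto (fun r : ℕ => phat (N+r+1)) Filter.atTop (nhds 0) := by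
        have h1 := hphatK.2.2.comp (Filter.tendsto_add_atTop_nat (N+1))
        have e : (phat ∘ fun r : ℕ => r + (N+1)) = fun r : ℕ => phat (N+r+1) := by
          funext r
          have : r + (N+1) = N+r+1 := by omega
          simp [this]
        rwa [e] at h1
      have ht2 : Filter.Tendsto (fun r : ℕ => phat (N+r) - phat (N+r+1))
          Filter.atTop (nhds 0) := by
        simpa using ht1.sub ht1'
      have hconstfun : (fun r : ℕ => phat (N+r) - phat (N+r+1))
          = fun _ : ℕ => phat N - phat (N+1) := by
        funext r
        exact hslope r
      rw [hconstfun] at ht2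
      have h0' : phat N - phat (N+1) = 0 := tendsto_nhds_unique tendsto_const_nhds ht2
      have hconst2 : ∀ r, phat (N+r) = phat N := by
        intro r
        induction r with
        | zero => simp
        | succ n ih =>
          have h1 := hslope n
          have e : N+(n+1) = N+n+1 := by omega
          rw [e]
          linarith
      have hfinal : phat N = 0 := by
        have h1 : (fun r : ℕ => phat (N+r)) = fun _ : ℕ => phat N := funext hconst2
        rw [h1] at ht1
        exact tendsto_nhds_unique tendsto_const_nhds ht1
      exact hzero N hfinal
    obtain ⟨j1, hj1m, hj1knot⟩ := hknots m
    obtain ⟨j2, hj2ge, hj2knot⟩ := hknots (j1+2)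
    have hT1 : T (j1+1) = 0 := hTknot j1 (hppos j1) hj1knot
    have hT2 : T (j2+1) = 0 := hTknot j2 (hppos j2) hj2knot
    have hD1 : 0 ≤ D (j1+1) := by
      have h1 := hTD (j1+1)
      have h2 := hTnn (j1+1+1)
      linarith
    have hdpos : ∀ s, j1+2 ≤ s → 0 < d s := by
      intro s hs
      simp only [hd]
      rw [hm s (by omega)]
      simpa using hppos s
    have hDpos : ∀ r, 0 < D (j1+2+r) := by
      intro r
      induction r with
      | zero =>
        have h1 := hDrec (j1+1)
        have h2 := hdpos (j1+1+1) (by omega)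
        have e : j1+2+0 = j1+1+1 := by omega
        rw [e]
        linarith
      | succ n ih =>
        have h1 := hDrec (j1+2+n)
        have h2 := hdpos (j1+2+n+1) (by omega)
        have e : j1+2+(n+1) = j1+2+n+1 := by omega
        rw [e]
        linarith
    have hTpos : ∀ r, 0 < T (j1+3+r) := by
      intro r
      induction r with
      | zero =>
        have h1 := hTD (j1+2)
        have h2 := hTnn (j1+2)
        have h3 := hDpos 0
        have e : j1+3+0 = j1+2+1 := by omega
        have e2 : j1+2+0 = j1+2 := by omega
        rw [e2] at h3
        rw [e]
        linarith
      | succ n ih =>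
        have h1 := hTD (j1+3+n)
        have h3 := hDpos (n+1)
        have e : j1+2+(n+1) = j1+3+n := by omega
        rw [e] at h3
        have e2 : j1+3+(n+1) = j1+3+n+1 := by omega
        rw [e2]
        linarith
    have hfin := hTpos (j2-j1-2)
    have e : j1+3+(j2-j1-2) = j2+1 := by omega
    rw [e] at hfin
    linarith
end
end

section
/- Let p̃ be a probability mass function on ℕ with finite support and p̂ the constrained least squares estimator. Then p̂(0) ≥ p̃(0). -/
open scoped BigOperators

noncomputable section

/-- Theorem 3 (mass at zero): `p̂(0) ≥ p̃(0)`. -/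
theorem stmt_7 (ptil : ℕ → ℝ) (hptil : IsFinPMF ptil)
    (phat : ℕ → ℝ) (hphatK : MemK phat)
    (hphat2 : Summable (fun i => (phat i) ^ 2))
    (hmin : ∀ f : ℕ → ℝ, MemK f → Summable (fun i => (f i) ^ 2) →
      Crit ptil phat ≤ Crit ptil f) :
    ptil 0 ≤ phat 0 := by
  -- summability of products with ptil (finite support)
  have hsupp : (Function.support ptil).Finite := hptil.2.1
  have hmul : ∀ q : ℕ → ℝ, Summable (fun i => q i * ptil i) := by
    intro q
    apply summable_of_finite_support
    apply hsupp.subset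
    intro i hi
    simp only [Function.mem_support] at hi ⊢
    intro h0; apply hi; rw [h0, mul_zero]
  -- key inequality for each ε > 0
  have key : ∀ ε : ℝ, 0 < ε → 0 ≤ ε * (phat 0 - ptil 0) + ε ^ 2 / 2 := by
    intro ε hε
    set g : ℕ → ℝ := fun i => if i = 0 then phat 0 + ε else phat i with hg
    have hgval : ∀ i ≠ 0, g i = phat i := by intro i hi; simp [hg, hi]
    have hdelta : ∀ i, g i ^ 2 = phat i ^ 2 + (if i = 0 then 2 * ε * phat 0 + ε ^ 2 else 0) := by
      intro i
      rcases eq_or_ne i 0 with rfl | hi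
      · simp [hg]; ring
      · simp [hg, hi]
    have hdsum : Summable (fun i : ℕ => if i = 0 then 2 * ε * phat 0 + ε ^ 2 else (0:ℝ)) := by
      apply summable_of_ne_finset_zero (s := {0})
      intro i hi
      simp only [Finset.mem_singleton] at hi
      simp [hi]
    have hg2 : Summable (fun i => g i ^ 2) := by
      have := hphat2.add hdsum
      apply this.congr
      intro i; exact (hdelta i).symm
    have hgK : MemK g := by
      refine ⟨?_, ?_, ?_⟩
      · intro i
        rcases i with _ | i
        · have := hphatK.1 0
          simp only [hg]
          norm_num
          linarith
        · have := hphatK.1 (i + 1)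
          simp only [hg]
          norm_num
          linarith
      · intro i
        rcases eq_or_ne i 0 with rfl | hi
        · simp [hg]; linarith [hphatK.2.1 0]
        · rw [hgval i hi]; exact hphatK.2.1 i
      · apply hphatK.2.2.congr'
        filter_upwards [Filter.eventually_ge_atTop 1] with i hi
        exact (hgval i (by omega)).symm
    have hle := hmin g hgK hg2
    -- compute Crit difference
    have hsum1 : ∑' i, g i ^ 2 = ∑' i, phat i ^ 2 + (2 * ε * phat 0 + ε ^ 2) := by
      have : ∑' i, g i ^ 2 = ∑' i, (phat i ^ 2 + if i = 0 then 2 * ε * phat 0 + ε ^ 2 else 0) :=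
        tsum_congr hdelta
      rw [this, Summable.tsum_add hphat2 hdsum,
        tsum_eq_single (f := fun i : ℕ => if i = 0 then 2 * ε * phat 0 + ε ^ 2 else (0:ℝ)) 0
          (by intro b hb; simp [hb])]
      simp
    have hdelta2 : ∀ i, g i * ptil i = phat i * ptil i + (if i = 0 then ε * ptil 0 else 0) := by
      intro i
      rcases eq_or_ne i 0 with rfl | hi
      · simp [hg]; ring
      · simp [hg, hi]
    have hdsum2 : Summable (fun i : ℕ => if i = 0 then ε * ptil 0 else (0:ℝ)) := by
      apply summable_of_ne_finset_zero (s := {0})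
      intro i hi
      simp only [Finset.mem_singleton] at hi
      simp [hi]
    have hsum2 : ∑' i, g i * ptil i = ∑' i, phat i * ptil i + ε * ptil 0 := by
      have : ∑' i, g i * ptil i = ∑' i, (phat i * ptil i + if i = 0 then ε * ptil 0 else 0) :=
        tsum_congr hdelta2
      rw [this, Summable.tsum_add (hmul phat) hdsum2,
        tsum_eq_single (f := fun i : ℕ => if i = 0 then ε * ptil 0 else (0:ℝ)) 0
          (by intro b hb; simp [hb])]
      simp
    rw [Crit, Crit, hsum1, hsum2] at hle
    nlinarith [hle]
  -- conclude
  by_contra h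
  push_neg at h
  set d := ptil 0 - phat 0 with hd
  have hdpos : 0 < d := by simp [hd]; linarith
  have := key d hdpos
  nlinarith
end
end

section
/- Let f : ℕ → [0,∞) satisfy lim_{i→∞} f(i) = 0. Then f ∈ 𝒦 if and only if there exists a sequence (π_j)_{j≥1} of nonnegative reals such that for every i ≥ 0 the series ∑_{j≥i+1} π_j T_j(i) converges and f(i) = ∑_{j≥i+1} π_j T_j(i). -/
open scoped BigOperators

noncomputable section

/-- The triangular function `T_j(i) = 2(j−i)/(j(j+1))` for `i < j`, `0` otherwise. -/
def Tri (j i : ℕ) : ℝ :=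
  if i < j then 2 * ((j : ℝ) - (i : ℝ)) / ((j : ℝ) * ((j : ℝ) + 1)) else 0

open Filter Finset

lemma tri_conv (j i : ℕ) : 0 ≤ Tri j (i + 2) - 2 * Tri j (i + 1) + Tri j i := by
  unfold Tri
  by_cases h2 : i + 2 < j
  · have h1 : i + 1 < j := by omega
    have h0 : i < j := by omega
    simp only [if_pos h0, if_pos h1, if_pos h2]
    push_cast
    have : 2 * ((j:ℝ) - (↑i + 2)) / ((j:ℝ) * (↑j + 1)) - 2 * (2 * ((j:ℝ) - (↑i + 1)) / ((j:ℝ) * (↑j + 1))) + 2 * ((j:ℝ) - ↑i) / ((j:ℝ) * (↑j + 1)) = 0 := by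
      ring
    linarith
  · by_cases h1 : i + 1 < j
    · have hj : j = i + 2 := by omega
      subst hj
      simp only [if_pos (by omega : i < i + 2), if_pos h1, if_neg (lt_irrefl _)]
      push_cast
      have : (0:ℝ) - 2 * (2 * ((↑i + 2) - (↑i + 1)) / ((↑i + 2) * ((↑i + (2:ℝ)) + 1))) + 2 * ((↑i + 2) - ↑i) / ((↑i + 2) * ((↑i + (2:ℝ)) + 1)) = 0 := by
        ring
      linarith
    · by_cases h0 : i < j
      · have hj : j = i + 1 := by omega
        subst hj
        simp only [if_pos h0, if_neg h1, if_neg h2]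
        push_cast
        have : (0:ℝ) ≤ 2 * (((i:ℝ)+1) - i) / (((i:ℝ)+1) * (((i:ℝ)+1)+1)) := by
          apply div_nonneg <;> nlinarith
        linarith
      · simp only [if_neg h0, if_neg h1, if_neg h2]; norm_num

lemma tele (f : ℕ → ℝ) (i M : ℕ) :
    ∑ k ∈ range M, (f (i+k) - f (i+k+1)) = f i - f (i+M) := by
  induction M with
  | zero => simp
  | succ M ih => rw [sum_range_succ, ih]; ring_nf

lemma abel_sum (g : ℕ → ℝ) (i M : ℕ) :
    ∑ k ∈ range M, ((k:ℝ)+1) * (g (i+k) - g (i+k+1))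
      = (∑ k ∈ range M, g (i+k)) - (M:ℝ) * g (i+M) := by
  induction M with
  | zero => simp
  | succ M ih =>
      rw [sum_range_succ, ih, sum_range_succ]
      rw [show i + (M + 1) = i + M + 1 by omega]
      push_cast
      ring

/-- weights -/
def piW (g : ℕ → ℝ) : ℕ → ℝ
  | 0 => 0
  | (k+1) => ((k:ℝ)+1) * ((k:ℝ)+2) / 2 * (g k - g (k+1))

lemma piW_succ (g : ℕ → ℝ) (k : ℕ) :
    piW g (k+1) = ((k:ℝ)+1) * ((k:ℝ)+2) / 2 * (g k - g (k+1)) := rfl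

/-- Theorem 4 (1): a nonnegative `f` vanishing at infinity belongs to `𝒦` iff it is
a (possibly infinite) mixture `f(i) = ∑_{j≥i+1} π_j T_j(i)` with nonnegative weights.
(Note `T_j(i) = 0` for `j ≤ i`, so the sum over all `j` equals the sum over `j ≥ i+1`.) -/
theorem stmt_8 (f : ℕ → ℝ) (hnn : ∀ i, 0 ≤ f i)
    (hlim : Filter.Tendsto f Filter.atTop (nhds 0)) :
    MemK f ↔
      ∃ π : ℕ → ℝ, (∀ j, 0 ≤ π j) ∧
        ∀ i : ℕ, Summable (fun j => π j * Tri j i) ∧ f i = ∑' j : ℕ, π j * Tri j i := by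
  constructor
  · rintro ⟨hconv, -, -⟩
    set g : ℕ → ℝ := fun n => f n - f (n+1) with hg
    have hganti : Antitone g := by
      apply antitone_nat_of_succ_le
      intro n
      have := hconv n
      simp only [hg]
      linarith
    have hglim : Tendsto g atTop (nhds 0) := by
      have h2 : Tendsto (fun n => f (n+1)) atTop (nhds 0) :=
        hlim.comp (tendsto_add_atTop_nat 1)
      simpa using hlim.sub h2
    have hgnn : ∀ n, 0 ≤ g n := fun n => hganti.le_of_tendsto hglim n
    have hdnn : ∀ n, 0 ≤ g n - g (n+1) := fun n => sub_nonneg.2 (hganti (Nat.le_succ n))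
    -- N * g N → 0
    have hNg : Tendsto (fun N : ℕ => (N:ℝ) * g N) atTop (nhds 0) := by
      have hub : ∀ N : ℕ, (N:ℝ) * g N ≤ 2 * f (N/2) := by
        intro N
        have hcard : ((Ico (N/2) N).card) • g N ≤ ∑ j ∈ Ico (N/2) N, g j :=
          Finset.card_nsmul_le_sum _ _ _ (fun x hx => hganti (by
            simp only [Finset.mem_Ico] at hx; omega))
        have hsum : ∑ j ∈ Ico (N/2) N, g j = f (N/2) - f N := by
          rw [Finset.sum_Ico_eq_sum_range]
          have h := tele f (N/2) (N - N/2)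
          rw [show N/2 + (N - N/2) = N by omega] at h
          simpa [hg] using h
        have hcard2 : (Ico (N/2) N).card = N - N/2 := Nat.card_Ico _ _
        rw [hcard2, hsum, nsmul_eq_mul] at hcard
        have hle : (N:ℝ) ≤ 2 * ((N - N/2 : ℕ) : ℝ) := by
          have : N ≤ 2 * (N - N/2) := by omega
          exact_mod_cast this
        have hfN := hnn N
        nlinarith [mul_le_mul_of_nonneg_right hle (hgnn N), hcard, hfN]
      have hlb : ∀ N : ℕ, (0:ℝ) ≤ (N:ℝ) * g N := fun N =>
        mul_nonneg (Nat.cast_nonneg N) (hgnn N)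
      have hhalf : Tendsto (fun N : ℕ => N / 2) atTop atTop := by
        apply tendsto_atTop_atTop.2
        intro b
        exact ⟨2*b, fun n hn => by omega⟩
      have h2f : Tendsto (fun N : ℕ => 2 * f (N/2)) atTop (nhds 0) := by
        simpa using (hlim.comp hhalf).const_mul 2
      exact tendsto_of_tendsto_of_tendsto_of_le_of_le tendsto_const_nhds h2f hlb hub
    refine ⟨piW g, ?_, ?_⟩
    · intro j
      match j with
      | 0 => exact le_refl 0
      | (k+1) =>
          apply mul_nonneg
          · positivity
          · exact hdnn k
    · intro i
      have hterm : ∀ n : ℕ, piW g (n + (i+1)) * Tri (n + (i+1)) i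
          = ((n:ℝ)+1) * (g (i+n) - g (i+n+1)) := by
        intro n
        rw [show n + (i+1) = (n+i) + 1 by omega]
        rw [piW_succ]
        simp only [Tri, if_pos (show i < (n+i)+1 by omega)]
        rw [show i + n = n + i by omega]
        push_cast
        have hD : ((n:ℝ)+(i:ℝ)+1) * (((n:ℝ)+(i:ℝ)+1) + 1) ≠ 0 := by positivity
        field_simp
        ring
      have hshift : HasSum (fun n : ℕ => ((n:ℝ)+1) * (g (i+n) - g (i+n+1))) (f i) := by
        rw [hasSum_iff_tendsto_nat_of_nonneg]
        · have heq : ∀ M, ∑ k ∈ range M, ((k:ℝ)+1) * (g (i+k) - g (i+k+1))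
              = (f i - f (i+M)) - (M:ℝ) * g (i+M) := by
            intro M
            rw [abel_sum]
            have h := tele f i M
            simp only [hg]
            try simp only [hg] at h
            rw [h]
          simp only [heq]
          have h1 : Tendsto (fun M : ℕ => f (i+M)) atTop (nhds 0) :=
            hlim.comp (tendsto_atTop_atTop.2 (fun b => ⟨b, fun n hn => by omega⟩))
          have h2 : Tendsto (fun M : ℕ => (M:ℝ) * g (i+M)) atTop (nhds 0) := by
            have htail : Tendsto (fun M : ℕ => ((i+M:ℕ):ℝ) * g (i+M)) atTop (nhds 0) := by
              exact hNg.comp (tendsto_atTop_atTop.2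
                (fun b => ⟨b, fun n hn => by omega⟩) : Tendsto (fun M : ℕ => i + M) atTop atTop)
            have hub : ∀ M : ℕ, (M:ℝ) * g (i+M) ≤ ((i+M:ℕ):ℝ) * g (i+M) := by
              intro M
              apply mul_le_mul_of_nonneg_right _ (hgnn _)
              exact_mod_cast Nat.le_add_left M i
            have hlb : ∀ M : ℕ, (0:ℝ) ≤ (M:ℝ) * g (i+M) := fun M =>
              mul_nonneg (Nat.cast_nonneg M) (hgnn _)
            exact tendsto_of_tendsto_of_tendsto_of_le_of_le tendsto_const_nhds htail hlb hub
          have hc : Tendsto (fun _ : ℕ => f i) atTop (nhds (f i)) := tendsto_const_nhds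
          have := (hc.sub h1).sub h2
          simpa using this
        · intro n
          exact mul_nonneg (by positivity) (hdnn (i+n))
      have hs2 : HasSum (fun n : ℕ => piW g (n + (i+1)) * Tri (n + (i+1)) i) (f i) := by
        have he : (fun n : ℕ => piW g (n + (i+1)) * Tri (n + (i+1)) i)
            = fun n : ℕ => ((n:ℝ)+1) * (g (i+n) - g (i+n+1)) := funext hterm
        rw [he]; exact hshift
      have hfull := (hasSum_nat_add_iff (f := fun j => piW g j * Tri j i) (i+1)).1 hs2
      have hzero : ∑ j ∈ range (i+1), piW g j * Tri j i = 0 := by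
        apply Finset.sum_eq_zero
        intro j hj
        have : ¬ i < j := by simp only [Finset.mem_range] at hj; omega
        simp [Tri, this]
      rw [hzero, add_zero] at hfull
      exact ⟨hfull.summable, hfull.tsum_eq.symm⟩
  · rintro ⟨π, hπnn, hπ⟩
    refine ⟨?_, hnn, hlim⟩
    intro i
    obtain ⟨s0, e0⟩ := hπ i
    obtain ⟨s1, e1⟩ := hπ (i+1)
    obtain ⟨s2, e2⟩ := hπ (i+2)
    have hcomb : f (i+2) - 2 * f (i+1) + f i
        = ∑' j, (π j * Tri j (i+2) - 2 * (π j * Tri j (i+1)) + π j * Tri j i) := by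
      rw [e0, e1, e2, ← tsum_mul_left, ← s2.tsum_sub (s1.mul_left 2),
        ← (s2.sub (s1.mul_left 2)).tsum_add s0]
    rw [hcomb]
    apply tsum_nonneg
    intro j
    have h1 := mul_nonneg (hπnn j) (tri_conv j i)
    nlinarith [h1]
end
end

section
/- Let f ∈ 𝒦 and suppose (π_j)_{j≥1} is a sequence of nonnegative reals satisfying f(i) = ∑_{j≥i+1} π_j T_j(i) for all i ≥ 0. Then π is uniquely determined by f, namely π_j = (j(j+1)/2) · (f(j+1) + f(j−1) − 2 f(j)) for all j ≥ 1. -/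
open scoped BigOperators

noncomputable section

/-- Theorem 4 (2): the mixing weights of `f ∈ 𝒦` are uniquely determined:
`π_j = (j(j+1)/2)(f(j+1) + f(j−1) − 2 f(j))` for all `j ≥ 1`. -/
theorem stmt_9 (f : ℕ → ℝ) (hf : MemK f)
    (π : ℕ → ℝ) (hπ : ∀ j, 0 ≤ π j)
    (hsummable : ∀ i : ℕ, Summable (fun j => π j * Tri j i))
    (hmix : ∀ i : ℕ, f i = ∑' j : ℕ, π j * Tri j i) :
    ∀ j : ℕ, 1 ≤ j →
      π j = ((j : ℝ) * ((j : ℝ) + 1) / 2) * (f (j + 1) + f (j - 1) - 2 * f j) := by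
  intro j hj
  have hj1 : (1 : ℝ) ≤ (j : ℝ) := by exact_mod_cast hj
  have hjpos : (0 : ℝ) < (j : ℝ) * ((j : ℝ) + 1) := by nlinarith
  have hcast : ((j - 1 : ℕ) : ℝ) = (j : ℝ) - 1 := by
    rw [Nat.cast_sub hj]; simp
  set g : ℕ → ℝ := fun k => π k * Tri k (j + 1) + π k * Tri k (j - 1)
      - 2 * (π k * Tri k j) with hg
  have hgj : g j = π j * (2 / ((j : ℝ) * ((j : ℝ) + 1))) := by
    simp only [hg, Tri]
    rw [if_neg (by omega), if_pos (by omega), if_neg (by omega)]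
    rw [hcast]; ring
  have hgk : ∀ k, k ≠ j → g k = 0 := by
    intro k hk
    simp only [hg, Tri]
    rcases lt_trichotomy k j with h | h | h
    · rw [if_neg (by omega), if_neg (by omega), if_neg (by omega)]; ring
    · exact absurd h hk
    · have hk1 : (1 : ℝ) ≤ (k : ℝ) := by
        have : 1 ≤ k := by omega
        exact_mod_cast this
      have hkpos : (0 : ℝ) < (k : ℝ) * ((k : ℝ) + 1) := by nlinarith
      rcases eq_or_lt_of_le (Nat.succ_le_of_lt h) with h2 | h2
      · -- k = j + 1
        rw [if_neg (by omega), if_pos (by omega), if_pos (by omega)]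
        have hkj : (k : ℝ) = (j : ℝ) + 1 := by exact_mod_cast h2.symm
        rw [hcast, hkj]
        field_simp
        ring
      · rw [if_pos (by omega), if_pos (by omega), if_pos (by omega)]
        rw [hcast]
        field_simp
        push_cast
        ring
  have hsum : f (j + 1) + f (j - 1) - 2 * f j = ∑' k, g k := by
    rw [hmix (j + 1), hmix (j - 1), hmix j]
    rw [← Summable.tsum_add (hsummable (j + 1)) (hsummable (j - 1)), ← tsum_mul_left,
      ← Summable.tsum_sub ((hsummable (j + 1)).add (hsummable (j - 1)))
        ((hsummable j).mul_left 2)]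
  have htsum : ∑' k, g k = g j := tsum_eq_single j hgk
  rw [hsum, htsum, hgj]
  field_simp
end
end

section
/- Let p̃ be a probability mass function on ℕ with finite support, with s̃ the maximum of its support, and let p̂ be the unique minimizer of Q over 𝒦, with ŝ the maximum of the support of p̂. Then F_{p̃}(ŝ + 1) = F_{p̂}(ŝ + 1), ŝ ≥ s̃, and p̂ ∈ 𝒞 (i.e., ∑_{i≥0} p̂(i) = 1). -/
open scoped BigOperators

noncomputable section

/-- `F_p(j) = ∑_{i=0}^{j} p(i)`. -/
def Fcum (p : ℕ → ℝ) (j : ℕ) : ℝ := ∑ i ∈ Finset.range (j + 1), p i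

/-- `H_p(j) = ∑_{i=0}^{j} F_p(i)`. -/
def Hcum (p : ℕ → ℝ) (j : ℕ) : ℝ := ∑ i ∈ Finset.range (j + 1), Fcum p i

private def gone (s : ℕ) : ℕ → ℝ := fun i => if i ≤ s then -1 else 0

private def gtwo (j : ℕ) : ℕ → ℝ := fun i => if i ≤ j then (j : ℝ) + 1 - (i : ℝ) else 0

private lemma eps_lemma (D A ε₀ : ℝ) (hA : 0 < A) (hε₀ : 0 < ε₀)
    (h : ∀ ε : ℝ, 0 < ε → ε ≤ ε₀ → 0 ≤ ε * D + ε ^ 2 * A) : 0 ≤ D := by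
  by_contra hD
  push_neg at hD
  have h2A : (0:ℝ) < 2 * A := by linarith
  have hεpos : 0 < min ε₀ (-D / (2 * A)) := lt_min hε₀ (div_pos (neg_pos.2 hD) h2A)
  have h1 := h _ hεpos (min_le_left _ _)
  set ε := min ε₀ (-D / (2 * A)) with hεdef
  have h2 : ε ≤ -D / (2 * A) := min_le_right _ _
  have h3 : ε * (2 * A) ≤ -D := (le_div_iff₀ h2A).mp h2
  nlinarith [mul_le_mul_of_nonneg_left h3 hεpos.le, mul_pos hεpos (neg_pos.2 hD)]

/-- Lemma 3: `F_{p̃}(ŝ+1) = F_{p̂}(ŝ+1)`, `ŝ ≥ s̃`, and `p̂ ∈ 𝒞`. -/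
theorem stmt_14 (ptil : ℕ → ℝ) (hptil : IsFinPMF ptil)
    (stil : ℕ) (hstil : IsMaxSupport ptil stil)
    (phat : ℕ → ℝ) (hphatK : MemK phat)
    (hphat2 : Summable (fun i => (phat i) ^ 2))
    (hmin : ∀ f : ℕ → ℝ, MemK f → Summable (fun i => (f i) ^ 2) →
      Crit ptil phat ≤ Crit ptil f)
    (shat : ℕ) (hshat : IsMaxSupport phat shat) :
    Fcum ptil (shat + 1) = Fcum phat (shat + 1) ∧
    stil ≤ shat ∧
    (∑' i : ℕ, phat i) = 1 := by
  obtain ⟨hconv, hpos, hlim⟩ := hphatK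
  obtain ⟨hps0, hpmax⟩ := hshat
  obtain ⟨hqpos, -, hqsum1⟩ := hptil
  obtain ⟨hqs0, hqmax⟩ := hstil
  have hzero : ∀ i, shat < i → phat i = 0 := by
    intro i hi; by_contra h; exact absurd (hpmax i h) (by omega)
  have hqzero : ∀ i, stil < i → ptil i = 0 := by
    intro i hi; by_contra h; exact absurd (hqmax i h) (by omega)
  have hpsh : 0 < phat shat := (hpos shat).lt_of_ne (Ne.symm hps0)
  have hqsummable : Summable ptil := summable_of_ne_finset_zero (s := Finset.range (stil+1))
    (fun i hi => hqzero i (by simp [Finset.mem_range] at hi; omega))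
  have hqts : ∑ i ∈ Finset.range (stil+1), ptil i = 1 := by
    rw [← hqsum1]
    exact (tsum_eq_sum (fun i hi => hqzero i (by simp [Finset.mem_range] at hi; omega))).symm
  -- phat is antitone
  have hmono : Monotone (fun i => phat (i+1) - phat i) :=
    monotone_nat_of_le_succ (fun i => by
      have := hconv i
      show phat (i+1) - phat i ≤ phat (i+1+1) - phat (i+1)
      linarith)
  have hanti : Antitone phat := antitone_nat_of_succ_le (by
    intro i
    rcases le_or_gt i shat with h | h
    · have h1 := hmono h
      have h2 : phat (shat+1) = 0 := hzero _ (by omega)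
      simp only [h2] at h1
      linarith [hpos shat]
    · have h2 : phat (i+1) = 0 := hzero _ (by omega)
      have h3 : phat i = 0 := hzero _ h
      simp [h2, h3])
  -- Crit as finite sum
  have crit_eq : ∀ (p : ℕ → ℝ) (m : ℕ), (∀ i, m ≤ i → p i = 0) →
      Crit ptil p = 1/2 * ∑ i ∈ Finset.range m, (p i)^2
        - ∑ i ∈ Finset.range m, p i * ptil i := by
    intro p m hp
    unfold Crit
    rw [tsum_eq_sum (s := Finset.range m)
        (fun i hi => by rw [hp i (by simp [Finset.mem_range] at hi; omega)]; ring),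
      tsum_eq_sum (s := Finset.range m)
        (fun i hi => by rw [hp i (by simp [Finset.mem_range] at hi; omega)]; ring)]
  -- generic perturbation inequality
  have pert : ∀ (g : ℕ → ℝ) (m : ℕ) (ε : ℝ), 0 < ε →
      (∀ i, m ≤ i → g i = 0) → shat < m →
      MemK (fun i => phat i + ε * g i) →
      0 ≤ ε * (∑ i ∈ Finset.range m, phat i * g i - ∑ i ∈ Finset.range m, g i * ptil i)
          + ε^2 * (1/2 * ∑ i ∈ Finset.range m, (g i)^2) := by
    intro g m ε hε hg hm hK
    have hpm : ∀ i, m ≤ i → phat i = 0 := fun i hi => hzero i (by omega)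
    have hfm : ∀ i, m ≤ i → phat i + ε * g i = 0 := fun i hi => by
      rw [hpm i hi, hg i hi]; ring
    have hsum : Summable (fun i => (phat i + ε * g i)^2) :=
      summable_of_ne_finset_zero (s := Finset.range m) (fun i hi => by
        rw [hfm i (by simp [Finset.mem_range] at hi; omega)]; norm_num)
    have h1 := hmin _ hK hsum
    rw [crit_eq phat m hpm, crit_eq _ m hfm] at h1
    have e1 : ∑ i ∈ Finset.range m, (phat i + ε * g i)^2
        = ∑ i ∈ Finset.range m, (phat i)^2 + ε * (2 * ∑ i ∈ Finset.range m, phat i * g i)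
          + ε^2 * ∑ i ∈ Finset.range m, (g i)^2 := by
      rw [Finset.mul_sum, Finset.mul_sum, Finset.mul_sum, ← Finset.sum_add_distrib,
        ← Finset.sum_add_distrib]
      exact Finset.sum_congr rfl (fun i _ => by ring)
    have e2 : ∑ i ∈ Finset.range m, (phat i + ε * g i) * ptil i
        = ∑ i ∈ Finset.range m, phat i * ptil i + ε * ∑ i ∈ Finset.range m, g i * ptil i := by
      rw [Finset.mul_sum, ← Finset.sum_add_distrib]
      exact Finset.sum_congr rfl (fun i _ => by ring)
    rw [e1, e2] at h1
    nlinarith [h1]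
  -- Application 1 : direction -(indicator of [0, shat])
  have memK1 : ∀ ε : ℝ, 0 < ε → ε ≤ phat shat → MemK (fun i => phat i + ε * gone shat i) := by
    intro ε hε hεle
    refine ⟨?_, ?_, ?_⟩
    · intro i
      have hc := hconv i
      show 0 ≤ (phat (i+2) + ε * gone shat (i+2)) - 2 * (phat (i+1) + ε * gone shat (i+1))
          + (phat i + ε * gone shat i)
      simp only [gone]
      by_cases h1 : i + 2 ≤ shat
      · rw [if_pos h1, if_pos (by omega), if_pos (by omega)]; linarith
      · by_cases h2 : i + 1 ≤ shat
        · rw [if_neg h1, if_pos h2, if_pos (by omega)]; linarith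
        · by_cases h3 : i ≤ shat
          · have hi : i = shat := by omega
            rw [if_neg h1, if_neg h2, if_pos h3]
            have hieq : phat shat ≤ phat i := le_of_eq (by rw [hi])
            linarith [hzero (i+1) (by omega), hzero (i+2) (by omega)]
          · rw [if_neg h1, if_neg h2, if_neg h3]; linarith
    · intro i
      show 0 ≤ phat i + ε * gone shat i
      simp only [gone]
      by_cases h : i ≤ shat
      · rw [if_pos h]; have := hanti h; linarith
      · rw [if_neg h]; linarith [hpos i]
    · have heq : (fun i => phat i + ε * gone shat i) =ᶠ[Filter.atTop] phat := by
        filter_upwards [Filter.eventually_ge_atTop (shat+1)] with i hi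
        simp only [gone]
        rw [if_neg (by omega)]
        ring
      exact Filter.Tendsto.congr' heq.symm hlim
  have hA1 : 0 < 1/2 * ∑ i ∈ Finset.range (shat+1), (gone shat i)^2 := by
    have he : ∀ i ∈ Finset.range (shat+1), (gone shat i)^2 = 1 := by
      intro i hi
      simp only [Finset.mem_range] at hi
      simp only [gone]
      rw [if_pos (by omega : i ≤ shat)]
      norm_num
    rw [Finset.sum_congr rfl he, Finset.sum_const, nsmul_eq_mul, mul_one]
    positivity
  have hD1 : 0 ≤ ∑ i ∈ Finset.range (shat+1), phat i * gone shat i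
      - ∑ i ∈ Finset.range (shat+1), gone shat i * ptil i :=
    eps_lemma _ _ (phat shat) hA1 hpsh (fun ε hε hle =>
      pert (gone shat) (shat+1) ε hε
        (fun i hi => by simp only [gone]; rw [if_neg (by omega)]) (by omega) (memK1 ε hε hle))
  have hc1 : ∑ i ∈ Finset.range (shat+1), phat i * gone shat i = - Fcum phat shat := by
    rw [Fcum, ← Finset.sum_neg_distrib]
    refine Finset.sum_congr rfl fun i hi => ?_
    simp only [Finset.mem_range] at hi
    simp only [gone]
    rw [if_pos (by omega : i ≤ shat)]
    ring
  have hc2 : ∑ i ∈ Finset.range (shat+1), gone shat i * ptil i = - Fcum ptil shat := by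
    rw [Fcum, ← Finset.sum_neg_distrib]
    refine Finset.sum_congr rfl fun i hi => ?_
    simp only [Finset.mem_range] at hi
    simp only [gone]
    rw [if_pos (by omega : i ≤ shat)]
    ring
  have hF1 : Fcum phat shat ≤ Fcum ptil shat := by
    rw [hc1, hc2] at hD1; linarith
  -- Application 2 : triangular directions
  have hSge : ∀ j : ℕ, max shat stil ≤ j →
      0 ≤ ∑ i ∈ Finset.range (j+1), phat i * gtwo j i
        - ∑ i ∈ Finset.range (j+1), gtwo j i * ptil i := by
    intro j hj
    have memK2 : ∀ ε : ℝ, 0 < ε → MemK (fun i => phat i + ε * gtwo j i) := by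
      intro ε hε
      refine ⟨?_, ?_, ?_⟩
      · intro i
        have hc := hconv i
        show 0 ≤ (phat (i+2) + ε * gtwo j (i+2)) - 2 * (phat (i+1) + ε * gtwo j (i+1))
            + (phat i + ε * gtwo j i)
        simp only [gtwo]
        by_cases h1 : i + 2 ≤ j
        · rw [if_pos h1, if_pos (by omega), if_pos (by omega)]
          push_cast
          linarith
        · by_cases h2 : i + 1 ≤ j
          · have hij : j = i + 1 := by omega
            subst hij
            rw [if_neg h1, if_pos h2, if_pos (by omega)]
            push_cast
            linarith
          · by_cases h3 : i ≤ j
            · have hij : j = i := by omega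
              subst hij
              rw [if_neg h1, if_neg h2, if_pos le_rfl]
              push_cast
              linarith [hε.le]
            · rw [if_neg h1, if_neg h2, if_neg h3]; linarith
      · intro i
        show 0 ≤ phat i + ε * gtwo j i
        simp only [gtwo]
        by_cases h : i ≤ j
        · rw [if_pos h]
          have hcast : (i:ℝ) ≤ j := Nat.cast_le.2 h
          have h0 : 0 ≤ ε * ((j:ℝ) + 1 - i) := mul_nonneg hε.le (by linarith)
          linarith [hpos i]
        · rw [if_neg h]; linarith [hpos i]
      · have heq : (fun i => phat i + ε * gtwo j i) =ᶠ[Filter.atTop] phat := by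
          filter_upwards [Filter.eventually_ge_atTop (j+1)] with i hi
          simp only [gtwo]
          rw [if_neg (by omega)]
          ring
        exact Filter.Tendsto.congr' heq.symm hlim
    have hA2 : 0 < 1/2 * ∑ i ∈ Finset.range (j+1), (gtwo j i)^2 := by
      have h0 : 0 < (gtwo j 0)^2 := by
        simp only [gtwo]
        rw [if_pos (Nat.zero_le j)]
        push_cast
        ring_nf
        positivity
      have hsum := Finset.sum_pos' (fun i (_ : i ∈ Finset.range (j+1)) => sq_nonneg (gtwo j i))
        ⟨0, Finset.mem_range.2 (by omega), h0⟩
      linarith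
    exact eps_lemma _ _ 1 hA2 one_pos (fun ε hε hle =>
      pert (gtwo j) (j+1) ε hε
        (fun i hi => by simp only [gtwo]; rw [if_neg (by omega)]) (by omega) (memK2 ε hε))
  -- turn the triangular inequalities into a statement about totals
  set N := max shat stil + 1 with hN
  set Sp := ∑ i ∈ Finset.range N, phat i with hSpdef
  set Mp := ∑ i ∈ Finset.range N, (i:ℝ) * phat i with hMpdef
  set Sq := ∑ i ∈ Finset.range N, ptil i with hSqdef
  set Mq := ∑ i ∈ Finset.range N, (i:ℝ) * ptil i with hMqdef
  have hq1 : Sq = 1 := by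
    rw [hSqdef, ← Finset.sum_subset (Finset.range_subset_range.2 (show stil + 1 ≤ N by omega))
      (fun i hi hnot => hqzero i (by simp only [Finset.mem_range] at hnot; omega))]
    exact hqts
  have hkey : ∀ j : ℕ, max shat stil ≤ j →
      0 ≤ ((j:ℝ)+1) * (Sp - Sq) - (Mp - Mq) := by
    intro j hj
    have h := hSge j hj
    have r1 : ∑ i ∈ Finset.range (j+1), phat i * gtwo j i = ((j:ℝ)+1) * Sp - Mp := by
      rw [← Finset.sum_subset (Finset.range_subset_range.2 (show N ≤ j+1 by omega))
        (fun i hi hnot => by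
          rw [hzero i (by simp only [Finset.mem_range] at hnot; omega)]; ring)]
      rw [hSpdef, hMpdef, Finset.mul_sum, ← Finset.sum_sub_distrib]
      refine Finset.sum_congr rfl fun i hi => ?_
      simp only [Finset.mem_range] at hi
      simp only [gtwo]
      rw [if_pos (by omega : i ≤ j)]
      ring
    have r2 : ∑ i ∈ Finset.range (j+1), gtwo j i * ptil i = ((j:ℝ)+1) * Sq - Mq := by
      rw [← Finset.sum_subset (Finset.range_subset_range.2 (show N ≤ j+1 by omega))
        (fun i hi hnot => by
          rw [hqzero i (by simp only [Finset.mem_range] at hnot; omega)]; ring)]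
      rw [hSqdef, hMqdef, Finset.mul_sum, ← Finset.sum_sub_distrib]
      refine Finset.sum_congr rfl fun i hi => ?_
      simp only [Finset.mem_range] at hi
      simp only [gtwo]
      rw [if_pos (by omega : i ≤ j)]
      ring
    rw [r1, r2] at h
    linarith
  have hSp1 : 1 ≤ Sp := by
    by_contra hlt
    push_neg at hlt
    have hcc : 0 < 1 - Sp := by linarith
    obtain ⟨n, hn⟩ := exists_nat_gt ((Mq - Mp)/(1 - Sp))
    set j0 := max (max shat stil) n with hj0
    have h1 := hkey j0 (le_max_left _ _)
    rw [hq1] at h1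
    have h2 : ((Mq - Mp)/(1-Sp)) < (j0:ℝ) + 1 := by
      have : (n:ℝ) ≤ (j0:ℝ) := Nat.cast_le.2 (le_max_right _ _)
      linarith
    have h3 : Mq - Mp < ((j0:ℝ)+1) * (1 - Sp) := (div_lt_iff₀ hcc).1 h2
    have e : ((j0:ℝ)+1) * (1 - Sp) = -(((j0:ℝ)+1) * (Sp - 1)) := by ring
    linarith
  have hFp : Fcum phat shat = Sp := by
    rw [Fcum, hSpdef]
    exact Finset.sum_subset (Finset.range_subset_range.2 (show shat + 1 ≤ N by omega))
      (fun i hi hnot => hzero i (by simp only [Finset.mem_range] at hnot; omega))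
  have hFle : Fcum ptil shat ≤ 1 := by
    rw [← hqsum1, Fcum]
    exact Summable.sum_le_tsum _ (fun i _ => hqpos i) hqsummable
  have hFhat1 : Fcum phat shat = 1 := by rw [hFp]; linarith [hF1, hFle, hFp.symm ▸ hSp1]
  have hFtil1 : Fcum ptil shat = 1 := by linarith [hF1, hFle, hFp ▸ hSp1, hFhat1]
  refine ⟨?_, ?_, ?_⟩
  · have a1 : Fcum phat (shat+1) = 1 := by
      have hh := hFhat1
      rw [Fcum] at hh ⊢
      rw [Finset.sum_range_succ, hzero (shat+1) (by omega)]
      linarith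
    have a2 : Fcum ptil (shat+1) = 1 := by
      have le1 : Fcum ptil (shat+1) ≤ 1 := by
        rw [← hqsum1, Fcum]
        exact Summable.sum_le_tsum _ (fun i _ => hqpos i) hqsummable
      have ge1 : 1 ≤ Fcum ptil (shat+1) := by
        have hh := hFtil1
        rw [Fcum] at hh ⊢
        rw [Finset.sum_range_succ]
        linarith [hqpos (shat+1)]
      linarith
    rw [a1, a2]
  · by_contra hcon
    push_neg at hcon
    have hq0 : 0 < ptil stil := (hqpos stil).lt_of_ne (Ne.symm hqs0)
    have hnotmem : stil ∉ Finset.range (shat+1) := by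
      simp only [Finset.mem_range]; omega
    have hle : Fcum ptil shat + ptil stil ≤ 1 := by
      rw [← hqsum1, Fcum]
      calc ∑ i ∈ Finset.range (shat+1), ptil i + ptil stil
          = ∑ i ∈ insert stil (Finset.range (shat+1)), ptil i := by
            rw [Finset.sum_insert hnotmem]; ring
        _ ≤ ∑' i, ptil i := Summable.sum_le_tsum _ (fun i _ => hqpos i) hqsummable
    linarith
  · rw [tsum_eq_sum (s := Finset.range (shat+1))
      (fun i hi => hzero i (by simp only [Finset.mem_range] at hi; omega))]
    have hh := hFhat1
    rw [Fcum] at hh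
    exact hh


end
end
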